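/- arXiv:2102.11177 — 10 statements merged into one kernel-verified Lean document; each statement's English description precedes it below -/
import Mathlib

section
/- Let G be a finite group. A subset S of G is a maximal clique of the enhanced power graph of G if and only if S is the underlying set of a maximal cyclic subgroup of G (a subgroup that is cyclic and is maximal among cyclic subgroups of G under inclusion). -/
open SimpleGraph

/-- The power graph of a group: distinct `x`,`y` adjacent iff one is a power of the other. -/
def powGraph (G : Type*) [Group G] : SimpleGraph G where
  Adj x y := x ≠ y ∧ (x ∈ Subgroup.zpowers y ∨ y ∈ Subgroup.zpowers x)
  symm := ⟨fun _ _ h => ⟨h.1.symm, h.2.symm⟩⟩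
  loopless := ⟨fun _ h => h.1 rfl⟩

/-- The enhanced power graph of a group: distinct `x`,`y` adjacent iff `⟨x,y⟩` is cyclic. -/
def epowGraph (G : Type*) [Group G] : SimpleGraph G where
  Adj x y := x ≠ y ∧ IsCyclic (Subgroup.closure ({x, y} : Set G))
  symm := by
    constructor
    intro x y h
    refine ⟨h.1.symm, ?_⟩
    rw [Set.pair_comm]
    exact h.2
  loopless := ⟨fun _ h => h.1 rfl⟩

/-- The commuting graph of a group: distinct `x`,`y` adjacent iff `x*y = y*x`. -/
def comGraph (G : Type*) [Group G] : SimpleGraph G where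
  Adj x y := x ≠ y ∧ Commute x y
  symm := ⟨fun _ _ h => ⟨h.1.symm, h.2.symm⟩⟩
  loopless := ⟨fun _ h => h.1 rfl⟩

/-- The non-generating graph of a group: distinct `x`,`y` adjacent iff `⟨x,y⟩ ≠ G`. -/
def ngenGraph (G : Type*) [Group G] : SimpleGraph G where
  Adj x y := x ≠ y ∧ Subgroup.closure ({x, y} : Set G) ≠ ⊤
  symm := by
    constructor
    intro x y h
    refine ⟨h.1.symm, ?_⟩
    rw [Set.pair_comm]
    exact h.2
  loopless := ⟨fun _ h => h.1 rfl⟩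

/-- The generating graph of a group: distinct `x`,`y` adjacent iff `⟨x,y⟩ = G`. -/
def genGraph (G : Type*) [Group G] : SimpleGraph G where
  Adj x y := x ≠ y ∧ Subgroup.closure ({x, y} : Set G) = ⊤
  symm := by
    constructor
    intro x y h
    refine ⟨h.1.symm, ?_⟩
    rw [Set.pair_comm]
    exact h.2
  loopless := ⟨fun _ h => h.1 rfl⟩

section MyAux
open Subgroup
variable {G : Type*} [Group G]

lemma myIsCyclic_zpowers (g : G) : IsCyclic (zpowers g) := by
  refine ⟨⟨g, mem_zpowers g⟩, fun x => ?_⟩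
  obtain ⟨n, hn⟩ := mem_zpowers_iff.mp x.2
  exact ⟨n, Subtype.ext (by simpa using hn)⟩

lemma myIsCyclic_of_le {H K : Subgroup G} (h : H ≤ K) (hK : IsCyclic K) : IsCyclic H := by
  haveI := hK
  exact isCyclic_of_surjective _ (Subgroup.subgroupOfEquivOfLe h).surjective

lemma myIsCyclic_closure_pair {K : Subgroup G} (hK : IsCyclic K) {a b : G}
    (ha : a ∈ K) (hb : b ∈ K) : IsCyclic (closure ({a, b} : Set G)) := by
  refine myIsCyclic_of_le ((closure_le K).mpr ?_) hK
  rintro x (rfl | rfl) <;> assumption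

lemma myCommute_of_cyclic {a b : G} (h : IsCyclic (closure ({a, b} : Set G))) :
    Commute a b := by
  haveI := h
  letI : CommGroup (closure ({a, b} : Set G)) := IsCyclic.commGroup
  have ha : a ∈ closure ({a, b} : Set G) := subset_closure (by simp)
  have hb : b ∈ closure ({a, b} : Set G) := subset_closure (by simp)
  have := mul_comm (⟨a, ha⟩ : closure ({a, b} : Set G)) ⟨b, hb⟩
  exact congrArg Subtype.val this



lemma myMem_zpowers_of_orderOf_dvd {α : Type*} [Group α] [Finite α] [IsCyclic α]
    {a b : α} (h : orderOf a ∣ orderOf b) : a ∈ zpowers b := by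
  obtain ⟨g, hg⟩ := IsCyclic.exists_generator (α := α)
  obtain ⟨i, hi'⟩ := mem_powers_iff_mem_zpowers.mpr (hg a)
  obtain ⟨j, hj'⟩ := mem_powers_iff_mem_zpowers.mpr (hg b)
  have hi : g ^ i = a := hi'
  have hj : g ^ j = b := hj'
  set N := orderOf g with hN
  set d := Nat.gcd N j with hd
  -- zpowers (g ^ d) = zpowers b
  have hgd_mem : g ^ d ∈ zpowers b := by
    have hbez : (d : ℤ) = N * Nat.gcdA N j + j * Nat.gcdB N j := Nat.gcd_eq_gcd_ab N j
    have : g ^ (d : ℤ) = b ^ Nat.gcdB N j := by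
      rw [hbez, zpow_add, zpow_mul, zpow_mul, zpow_natCast, pow_orderOf_eq_one, one_zpow,
        one_mul, zpow_natCast, hj]
    rw [← zpow_natCast]
    exact this ▸ zpow_mem (mem_zpowers b) _
  -- orderOf b = N / d and d ∣ i
  have hNpos : 0 < N := orderOf_pos g
  have hdN : d ∣ N := Nat.gcd_dvd_left N j
  have hordb : orderOf b = N / d := by rw [← hj, orderOf_pow]
  have hmd : orderOf b * d = N := by rw [hordb]; exact Nat.div_mul_cancel hdN
  have haN : N ∣ i * orderOf b := by
    have h1 : a ^ orderOf b = 1 := orderOf_dvd_iff_pow_eq_one.mp h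
    have : g ^ (i * orderOf b) = 1 := by rw [pow_mul, hi, h1]
    exact orderOf_dvd_of_pow_eq_one this
  have hmpos : 0 < orderOf b := orderOf_pos b
  have hdi : d ∣ i := by
    have : orderOf b * d ∣ orderOf b * i := by
      rw [hmd]; simpa [mul_comm] using haN
    exact (mul_dvd_mul_iff_left hmpos.ne').mp this
  -- conclude
  obtain ⟨r, hr⟩ := hdi
  have : a = (g ^ d) ^ r := by rw [← pow_mul, ← hr, hi]
  rw [this]
  exact pow_mem hgd_mem r

lemma myMem_zpowers_of_orderOf_dvd' {G : Type*} [Group G] [Finite G] {K : Subgroup G}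
    (hK : IsCyclic K) {a b : G} (ha : a ∈ K) (hb : b ∈ K)
    (h : orderOf a ∣ orderOf b) : a ∈ zpowers b := by
  haveI := hK
  have h' : orderOf (⟨a, ha⟩ : K) ∣ orderOf (⟨b, hb⟩ : K) := by
    rwa [Subgroup.orderOf_mk, Subgroup.orderOf_mk]
  obtain ⟨n, hn⟩ := mem_zpowers_iff.mp (myMem_zpowers_of_orderOf_dvd h')
  exact mem_zpowers_iff.mpr ⟨n, by simpa using congrArg Subtype.val hn⟩

lemma myLeft_mem_zpowers_mul {G : Type*} [Group G] [Finite G] {a b : G}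
    (hc : Commute a b) (hco : Nat.Coprime (orderOf a) (orderOf b)) :
    a ∈ zpowers (a * b) := by
  obtain ⟨m, hm⟩ := exists_pow_eq_self_of_coprime (x := a) (n := orderOf b) hco.symm
  have hab : (a * b) ^ orderOf b = a ^ orderOf b := by
    rw [hc.mul_pow, pow_orderOf_eq_one, mul_one]
  have : a = ((a * b) ^ orderOf b) ^ m := by rw [hab, hm]
  have h1 : (a * b) ^ orderOf b ∈ zpowers (a * b) := pow_mem (mem_zpowers (a * b)) _
  have h2 := pow_mem h1 m
  rwa [← this] at h2

lemma myRight_mem_zpowers_mul {G : Type*} [Group G] [Finite G] {a b : G}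
    (hc : Commute a b) (hco : Nat.Coprime (orderOf a) (orderOf b)) :
    b ∈ zpowers (a * b) := by
  have := myLeft_mem_zpowers_mul hc.symm hco.symm
  rwa [← hc.eq] at this



lemma myExists_decomp {G : Type*} [Group G] {y : G} {m n : ℕ}
    (hmn : Nat.Coprime n m) (hm : 0 < m) (hord : orderOf y ∣ m * n) :
    ∃ b c : G, y = b * c ∧ b ∈ zpowers y ∧ c ∈ zpowers y ∧ b ^ m = 1 ∧ c ^ n = 1 := by
  have htpos : 0 < m.totient := Nat.totient_pos.mpr hm
  set u := n ^ (m.totient - 1) with hu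
  have hnu : n * u = n ^ m.totient := by
    rw [hu, ← pow_succ']
    congr 1
    omega
  have hmod : n * u ≡ 1 [MOD m] := by
    rw [hnu]; exact (Nat.ModEq.pow_totient hmn)
  have hmdvd : (m : ℤ) ∣ (1 : ℤ) - (n * u : ℕ) := (Nat.modEq_iff_dvd).mp hmod
  refine ⟨y ^ ((n * u : ℕ) : ℤ), y ^ ((1 : ℤ) - (n * u : ℕ)), ?_, zpow_mem (mem_zpowers y) _,
    zpow_mem (mem_zpowers y) _, ?_, ?_⟩
  · rw [← zpow_add]
    norm_num
  · rw [← zpow_natCast, ← zpow_mul]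
    apply orderOf_dvd_iff_zpow_eq_one.mp
    have h1 : (orderOf y : ℤ) ∣ ((m * n : ℕ) : ℤ) := Int.natCast_dvd_natCast.mpr hord
    refine h1.trans ⟨u, by push_cast; ring⟩
  · rw [← zpow_natCast, ← zpow_mul]
    apply orderOf_dvd_iff_zpow_eq_one.mp
    have h1 : (orderOf y : ℤ) ∣ ((m * n : ℕ) : ℤ) := Int.natCast_dvd_natCast.mpr hord
    refine h1.trans ?_
    obtain ⟨t, ht⟩ := hmdvd
    refine ⟨t, ?_⟩
    push_cast at ht ⊢
    rw [ht]
    ring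

lemma myKey {G : Type*} [Group G] [Finite G] (S : Set G)
    (h1 : ∀ x ∈ S, ∀ y ∈ S, IsCyclic (closure ({x, y} : Set G)))
    (h2 : ∀ x ∈ S, (zpowers x : Set G) ⊆ S) (hS1 : (1 : G) ∈ S) :
    ∀ t : Finset ℕ, (∀ p ∈ t, p.Prime) →
      ∃ z : G, (∀ w ∈ S, Commute z w) ∧ (orderOf z).primeFactors ⊆ t ∧
        ∀ y ∈ S, (orderOf y).primeFactors ⊆ t → y ∈ zpowers z := by
  intro t
  induction t using Finset.induction with
  | empty =>
    intro _
    refine ⟨1, fun w _ => Commute.one_left w, by simp, fun y _ hfac => ?_⟩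
    have h0 : orderOf y ≠ 0 := (orderOf_pos y).ne'
    have : orderOf y = 1 := by
      rcases Nat.primeFactors_eq_empty.mp (Finset.subset_empty.mp hfac) with h | h
      · exact absurd h h0
      · exact h
    rw [orderOf_eq_one_iff] at this
    rw [this]
    exact one_mem _
  | @insert p t' hp ih =>
    intro hprime
    have hpp : p.Prime := hprime p (Finset.mem_insert_self p t')
    obtain ⟨z', hz'comm, hz'fac, hz'⟩ := ih fun q hq => hprime q (Finset.mem_insert_of_mem hq)
    set Sp : Set G := {x | x ∈ S ∧ ∃ k, orderOf x = p ^ k} with hSp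
    have hSpne : Sp.Nonempty := ⟨1, hS1, 0, by simp⟩
    obtain ⟨x, hxSp, hxmax'⟩ := Set.Finite.exists_maximalFor orderOf Sp (Set.toFinite Sp) hSpne
    have hxmax : ∀ a ∈ Sp, orderOf x ≤ orderOf a → orderOf x = orderOf a :=
      fun a ha h => le_antisymm h (hxmax' ha h)
    obtain ⟨hxS, k, hxk⟩ := hxSp
    have hz'0 : orderOf z' ≠ 0 := (orderOf_pos z').ne'
    have hpz' : ¬ p ∣ orderOf z' := fun hdvd =>
      hp (hz'fac (Nat.mem_primeFactors.mpr ⟨hpp, hdvd, hz'0⟩))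
    have hco : Nat.Coprime (orderOf z') (orderOf x) := by
      rw [hxk]
      exact ((hpp.coprime_iff_not_dvd.mpr hpz').symm).pow_right _
    have hcomm : Commute z' x := hz'comm x hxS
    set z := z' * x with hz
    have hz'mem : z' ∈ zpowers z := myLeft_mem_zpowers_mul hcomm hco
    have hxmem : x ∈ zpowers z := myRight_mem_zpowers_mul hcomm hco
    refine ⟨z, ?_, ?_, ?_⟩
    · intro w hw
      exact (hz'comm w hw).mul_left (myCommute_of_cyclic (h1 x hxS w hw))
    · have hordz : orderOf z = orderOf z' * orderOf x :=
        hcomm.orderOf_mul_eq_mul_orderOf_of_coprime hco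
      rw [hordz, Nat.primeFactors_mul hz'0 (orderOf_pos x).ne']
      refine Finset.union_subset (hz'fac.trans (Finset.subset_insert _ _)) ?_
      intro q hq
      obtain ⟨hqp, hqd, -⟩ := Nat.mem_primeFactors.mp hq
      rw [hxk] at hqd
      have : q = p := (Nat.prime_dvd_prime_iff_eq hqp hpp).mp (hqp.dvd_of_dvd_pow hqd)
      rw [this]
      exact Finset.mem_insert_self p t'
    · intro y hyS hyfac
      have hordy0 : orderOf y ≠ 0 := (orderOf_pos y).ne'
      set e := (orderOf y).factorization p with he
      set m := p ^ e with hm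
      set n := orderOf y / m with hn
      have hmn : m * n = orderOf y := Nat.ordProj_mul_ordCompl_eq_self (orderOf y) p
      have hn0 : n ≠ 0 := Nat.ordCompl_pos p hordy0 |>.ne'
      have hco2 : Nat.Coprime n m :=
        ((Nat.coprime_ordCompl hpp hordy0).symm).pow_right e
      obtain ⟨b, c, hybc, hbmem, hcmem, hbm, hcn⟩ :=
        myExists_decomp (y := y) hco2 (pow_pos hpp.pos e) (hmn ▸ dvd_refl _)
      have hbS : b ∈ S := h2 y hyS hbmem
      have hcS : c ∈ S := h2 y hyS hcmem
      -- b ∈ zpowers x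
      have hbord : orderOf b ∣ p ^ e := orderOf_dvd_of_pow_eq_one hbm
      obtain ⟨j, hje, hbj⟩ := (Nat.dvd_prime_pow hpp).mp hbord
      have hbSp : b ∈ Sp := ⟨hbS, j, hbj⟩
      have hbdvd : orderOf b ∣ orderOf x := by
        rcases le_total (orderOf b) (orderOf x) with hle | hle
        · rw [hbj, hxk]
          refine pow_dvd_pow p ?_
          rw [hbj, hxk] at hle
          exact (Nat.pow_le_pow_iff_right hpp.one_lt).mp hle
        · rw [hxmax b hbSp hle]
      have hbz : b ∈ zpowers x :=
        myMem_zpowers_of_orderOf_dvd' (h1 b hbS x hxS)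
          (subset_closure (Set.mem_insert _ _))
          (subset_closure (Set.mem_insert_of_mem _ rfl)) hbdvd
      -- c ∈ zpowers z'
      have hcfac : (orderOf c).primeFactors ⊆ t' := by
        intro q hq
        obtain ⟨hqp, hqd, -⟩ := Nat.mem_primeFactors.mp hq
        have hqn : q ∣ n := hqd.trans (orderOf_dvd_of_pow_eq_one hcn)
        have hqy : q ∣ orderOf y := hqn.trans (Nat.div_dvd_of_dvd (Nat.ordProj_dvd _ _))
        have hq' : q ∈ insert p t' := hyfac (Nat.mem_primeFactors.mpr ⟨hqp, hqy, hordy0⟩)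
        have hqne : q ≠ p := by
          rintro rfl
          exact Nat.not_dvd_ordCompl hpp hordy0 hqn
        exact Finset.mem_of_mem_insert_of_ne hq' hqne
      have hcz' : c ∈ zpowers z' := hz' c hcS hcfac
      rw [hybc]
      exact mul_mem (zpowers_le.mpr hxmem hbz) (zpowers_le.mpr hz'mem hcz')

end MyAux

set_option maxHeartbeats 1000000 in
/-- In a finite group `G`, a subset `S` is a maximal clique of the enhanced power
graph iff `S` is the underlying set of a maximal cyclic subgroup of `G`. -/
theorem maximal_clique_epowGraph_iff_maximal_cyclic (G : Type*) [Group G] [Finite G]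
    (S : Set G) :
    ((epowGraph G).IsClique S ∧ ∀ T : Set G, (epowGraph G).IsClique T → S ⊆ T → T = S) ↔
    (∃ H : Subgroup G, (H : Set G) = S ∧ IsCyclic H ∧
      ∀ K : Subgroup G, IsCyclic K → H ≤ K → K = H) := by
  constructor
  · rintro ⟨hcl, hmax⟩
    have h1 : ∀ x ∈ S, ∀ y ∈ S, IsCyclic (Subgroup.closure ({x, y} : Set G)) := by
      intro x hx y hy
      by_cases hxy : x = y
      · subst hxy
        rw [Set.pair_eq_singleton, ← Subgroup.zpowers_eq_closure]
        exact myIsCyclic_zpowers x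
      · exact (hcl hx hy hxy).2
    have h2 : ∀ x ∈ S, ((Subgroup.zpowers x : Subgroup G) : Set G) ⊆ S := by
      intro x hx
      have hT : (epowGraph G).IsClique (S ∪ (Subgroup.zpowers x : Subgroup G)) := by
        intro a ha b hb hab
        refine ⟨hab, ?_⟩
        rcases ha with ha | ha <;> rcases hb with hb | hb
        · exact h1 a ha b hb
        · have hle : Subgroup.zpowers x ≤ Subgroup.closure ({a, x} : Set G) :=
            Subgroup.zpowers_le.mpr (Subgroup.subset_closure (Set.mem_insert_of_mem _ rfl))
          have hb' : b ∈ Subgroup.zpowers x := hb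
          exact myIsCyclic_closure_pair (h1 a ha x hx)
            (Subgroup.subset_closure (Set.mem_insert _ _)) (hle hb')
        · have hle : Subgroup.zpowers x ≤ Subgroup.closure ({b, x} : Set G) :=
            Subgroup.zpowers_le.mpr (Subgroup.subset_closure (Set.mem_insert_of_mem _ rfl))
          have ha' : a ∈ Subgroup.zpowers x := ha
          exact myIsCyclic_closure_pair (h1 b hb x hx) (hle ha')
            (Subgroup.subset_closure (Set.mem_insert _ _))
        · have ha' : a ∈ Subgroup.zpowers x := ha
          have hb' : b ∈ Subgroup.zpowers x := hb
          exact myIsCyclic_closure_pair (myIsCyclic_zpowers x) ha' hb'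
      have heq := hmax _ hT Set.subset_union_left
      intro g hg
      rw [← heq]
      exact Set.mem_union_right _ hg
    have hne : S.Nonempty := by
      rw [Set.nonempty_iff_ne_empty]
      intro hemp
      have hcl1 : (epowGraph G).IsClique ({1} : Set G) := by
        intro a ha b hb hab
        rw [Set.mem_singleton_iff] at ha hb
        exact absurd (ha.trans hb.symm) hab
      have := hmax {1} hcl1 (by rw [hemp]; exact Set.empty_subset _)
      rw [hemp] at this
      exact Set.singleton_ne_empty 1 this
    obtain ⟨x₀, hx₀⟩ := hne
    have hS1 : (1 : G) ∈ S := h2 x₀ hx₀ (Subgroup.one_mem _)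
    obtain ⟨z, -, -, hz⟩ := myKey S h1 h2 hS1 (Nat.card G).primeFactors
      (fun p hp => Nat.prime_of_mem_primeFactors hp)
    have hcard0 : (Nat.card G) ≠ 0 := Nat.card_pos.ne'
    have hSz : S ⊆ (Subgroup.zpowers z : Subgroup G) := fun y hy =>
      hz y hy (Nat.primeFactors_mono (orderOf_dvd_natCard y) hcard0)
    have hzcl : (epowGraph G).IsClique ((Subgroup.zpowers z : Subgroup G) : Set G) := by
      intro a ha b hb hab
      exact ⟨hab, myIsCyclic_closure_pair (myIsCyclic_zpowers z) ha hb⟩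
    have hHset : ((Subgroup.zpowers z : Subgroup G) : Set G) = S := hmax _ hzcl hSz
    refine ⟨Subgroup.zpowers z, hHset, myIsCyclic_zpowers z, ?_⟩
    intro K hKc hle
    have hKcl : (epowGraph G).IsClique (K : Set G) := by
      intro a ha b hb hab
      exact ⟨hab, myIsCyclic_closure_pair hKc ha hb⟩
    have hKS : S ⊆ (K : Set G) := by
      rw [← hHset]
      exact hle
    have := hmax _ hKcl hKS
    exact SetLike.coe_injective (this.trans hHset.symm)
  · rintro ⟨H, hHS, hHc, hHmax⟩
    constructor
    · intro a ha b hb hab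
      rw [← hHS] at ha hb
      exact ⟨hab, myIsCyclic_closure_pair hHc ha hb⟩
    · intro T hT hST
      haveI := hHc
      obtain ⟨g, hg⟩ := IsCyclic.exists_generator (α := H)
      have hHz : H = Subgroup.zpowers (g : G) := by
        apply le_antisymm
        · intro h hh
          obtain ⟨n, hn⟩ := Subgroup.mem_zpowers_iff.mp (hg ⟨h, hh⟩)
          exact Subgroup.mem_zpowers_iff.mpr ⟨n, by simpa using congrArg Subtype.val hn⟩
        · exact Subgroup.zpowers_le.mpr g.2
      have hgS : (g : G) ∈ S := by rw [← hHS]; exact g.2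
      apply Set.Subset.antisymm _ hST
      intro u hu
      by_cases hus : u ∈ S
      · exact hus
      · exfalso
        have hug : u ≠ (g : G) := fun h => hus (h ▸ hgS)
        have hadj := hT hu (hST hgS) hug
        have hKc : IsCyclic (Subgroup.closure ({(g : G), u} : Set G)) := by
          rw [Set.pair_comm]
          exact hadj.2
        have hle : H ≤ Subgroup.closure ({(g : G), u} : Set G) :=
          le_trans (le_of_eq hHz)
            (Subgroup.zpowers_le.mpr (Subgroup.subset_closure (Set.mem_insert _ _)))
        have hKH := hHmax _ hKc hle
        apply hus
        rw [← hHS, ← hKH]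
        exact Subgroup.subset_closure (Set.mem_insert_of_mem _ rfl)
end

section
/- For every finite group G, the power graph of G is a perfect graph; that is, for every subset A of G, the clique number of the induced subgraph of Pow(G) on A equals the chromatic number of that induced subgraph. -/
open SimpleGraph

/-- The power graph of a finite group is perfect: every induced subgraph has
clique number equal to chromatic number. -/
theorem powGraph_perfect (G : Type*) [Group G] [Finite G] (A : Set G) :
    ((powGraph G).induce A).chromaticNumber = (((powGraph G).induce A).cliqueNum : ℕ∞) := by
  classical
  set H := (powGraph G).induce A with hH
  letI : Fintype ↥A := Fintype.ofFinite _
  obtain ⟨f, hf⟩ := Countable.exists_injective_nat G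
  letI P : PartialOrder ↥A := PartialOrder.lift
    (fun x => toLex ((Subgroup.zpowers (x : G)), f (x : G)))
    (fun x y h => by
      have h2 : f (x : G) = f (y : G) := congrArg (fun p => (ofLex p).2) h
      exact Subtype.ext (hf h2))
  set ω := H.cliqueNum with hω
  -- adjacency implies comparability
  have hadj : ∀ x y : ↥A, H.Adj x y → x < y ∨ y < x := by
    intro x y hxy
    obtain ⟨hne, hp⟩ : (x : G) ≠ (y : G) ∧ ((x:G) ∈ Subgroup.zpowers (y:G) ∨
        (y:G) ∈ Subgroup.zpowers (x:G)) := hxy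
    have hle : Subgroup.zpowers (x:G) ≤ Subgroup.zpowers (y:G) ∨
        Subgroup.zpowers (y:G) ≤ Subgroup.zpowers (x:G) := by
      rcases hp with h | h
      · exact Or.inl (Subgroup.zpowers_le.mpr h)
      · exact Or.inr (Subgroup.zpowers_le.mpr h)
    have hfne : f (x:G) ≠ f (y:G) := fun h => hne (hf h)
    rcases hle with h | h
    · rcases lt_or_eq_of_le h with h' | h'
      · exact Or.inl (Prod.Lex.lt_iff.mpr (Or.inl h'))
      · rcases lt_or_gt_of_ne hfne with h2 | h2
        · exact Or.inl (Prod.Lex.lt_iff.mpr (Or.inr ⟨h', h2⟩))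
        · exact Or.inr (Prod.Lex.lt_iff.mpr (Or.inr ⟨h'.symm, h2⟩))
    · rcases lt_or_eq_of_le h with h' | h'
      · exact Or.inr (Prod.Lex.lt_iff.mpr (Or.inl h'))
      · rcases lt_or_gt_of_ne hfne with h2 | h2
        · exact Or.inl (Prod.Lex.lt_iff.mpr (Or.inr ⟨h'.symm, h2⟩))
        · exact Or.inr (Prod.Lex.lt_iff.mpr (Or.inr ⟨h', h2⟩))
  -- comparability implies adjacency
  have hadj' : ∀ x y : ↥A, x < y → H.Adj x y := by
    intro x y hxy
    have hne : x ≠ y := ne_of_lt hxy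
    have hle : Subgroup.zpowers (x:G) ≤ Subgroup.zpowers (y:G) := by
      rcases Prod.Lex.lt_iff.mp hxy with h | h
      · exact le_of_lt h
      · exact le_of_eq h.1
    exact ⟨fun h => hne (Subtype.ext h), Or.inl (hle (Subgroup.mem_zpowers _))⟩
  -- chains give cliques
  have hchain : ∀ p : LTSeries ↥A, p.length + 1 ≤ ω := by
    intro p
    have hinj : Function.Injective p := p.strictMono.injective
    have hclique : H.IsClique (Finset.image p Finset.univ : Finset ↥A) := by
      intro a ha b hb hab
      simp only [Finset.coe_image, Set.mem_image] at ha hb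
      obtain ⟨i, -, rfl⟩ := ha
      obtain ⟨j, -, rfl⟩ := hb
      have hij : i ≠ j := fun h => hab (by rw [h])
      rcases lt_or_gt_of_ne hij with h | h
      · exact hadj' _ _ (p.strictMono h)
      · exact (hadj' _ _ (p.strictMono h)).symm
    have hcard : (Finset.image p Finset.univ).card = p.length + 1 := by
      rw [Finset.card_image_of_injective _ hinj, Finset.card_univ, Fintype.card_fin]
    calc p.length + 1 = (Finset.image p Finset.univ).card := hcard.symm
      _ ≤ ω := hclique.card_le_cliqueNum
  -- every vertex gives ω ≥ 1
  have hω1 : ∀ _ : ↥A, 1 ≤ ω := by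
    intro x
    have := hchain (RelSeries.singleton _ x)
    simpa using this
  -- heights are bounded by ω - 1
  have hht : ∀ x : ↥A, Order.height x ≤ (ω - 1 : ℕ) := by
    intro x
    apply Order.height_le
    intro p _
    have h1 := hchain p
    have h2 := hω1 x
    exact_mod_cast Nat.cast_le.mpr (by omega : p.length ≤ ω - 1)
  have hnetop : ∀ x : ↥A, Order.height x ≠ ⊤ := by
    intro x h
    have := hht x
    rw [h] at this
    exact (ENat.coe_lt_top (ω - 1)).not_ge this
  -- the coloring
  have hcol : H.Colorable ω := by
    refine ⟨⟨fun x => ⟨(Order.height x).toNat, ?_⟩, ?_⟩⟩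
    · have h1 := hω1 x
      have h2 : (Order.height x).toNat ≤ ω - 1 := ENat.toNat_le_of_le_coe (hht x)
      omega
    · intro x y hxy
      intro hc
      have hc2 : (Order.height x).toNat = (Order.height y).toNat := congrArg Fin.val hc
      have hne : Order.height x ≠ Order.height y := by
        rcases hadj x y hxy with h | h
        · exact ne_of_lt (Order.height_strictMono h
            (lt_of_le_of_lt (hht x) (ENat.coe_lt_top _)))
        · exact (ne_of_lt (Order.height_strictMono h
            (lt_of_le_of_lt (hht y) (ENat.coe_lt_top _)))).symm
      apply hne
      rw [← ENat.coe_toNat (hnetop x), ← ENat.coe_toNat (hnetop y), hc2]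
  -- conclude
  refine le_antisymm (hcol.chromaticNumber_le) ?_
  obtain ⟨s, hs⟩ := H.exists_isNClique_cliqueNum
  have := hs.isClique.card_le_chromaticNumber
  rwa [hs.card_eq] at this
end

section
/- Let G be a finite group. The power graph of G is equal to the enhanced power graph of G (i.e., they have the same edge set) if and only if G contains no element of order pq for any two distinct primes p and q (equivalently, G contains no subgroup isomorphic to C_p × C_q with p, q distinct primes). -/
open SimpleGraph

section AuxLemmas

variable {G₀ : Type*} [Group G₀]

lemma aux_zpowers_isCyclic (g : G₀) : IsCyclic (Subgroup.zpowers g) := by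
  refine ⟨⟨⟨g, Subgroup.mem_zpowers g⟩, ?_⟩⟩
  rintro ⟨z, k, rfl⟩
  exact ⟨k, by ext; simp⟩

lemma aux_mem_zpowers_of_gcd (g : G₀) (a b n : ℕ)
    (hgn : g ^ n = 1) (hd : Nat.gcd b n ∣ a) : g ^ a ∈ Subgroup.zpowers (g ^ b) := by
  have hgcd : g ^ ((Nat.gcd b n : ℤ)) ∈ Subgroup.zpowers (g ^ b) := by
    have hbz : (Nat.gcd b n : ℤ) = b * Nat.gcdA b n + n * Nat.gcdB b n := Nat.gcd_eq_gcd_ab b n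
    rw [hbz, zpow_add, zpow_mul, zpow_mul]
    have h1 : (g : G₀) ^ (n : ℤ) = 1 := by rw [zpow_natCast, hgn]
    rw [h1, one_zpow, mul_one, ← zpow_natCast g b]
    exact Subgroup.zpow_mem_zpowers _ _
  obtain ⟨c, hc⟩ := hd
  have h2 : g ^ a = (g ^ ((Nat.gcd b n : ℤ))) ^ (c : ℤ) := by
    rw [← zpow_mul, ← Nat.cast_mul, ← hc, zpow_natCast]
  rw [h2]
  exact Subgroup.zpow_mem _ hgcd _

lemma aux_zpowers_comparable [Finite G₀] {p k : ℕ}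
    (hp : p.Prime) {g : G₀} (hg : orderOf g = p ^ k) {x y : G₀}
    (hx : x ∈ Subgroup.zpowers g) (hy : y ∈ Subgroup.zpowers g) :
    x ∈ Subgroup.zpowers y ∨ y ∈ Subgroup.zpowers x := by
  have hfin : IsOfFinOrder g := isOfFinOrder_of_finite g
  obtain ⟨a, rfl⟩ := hfin.mem_powers_iff_mem_zpowers.mpr hx
  obtain ⟨b, rfl⟩ := hfin.mem_powers_iff_mem_zpowers.mpr hy
  set n := p ^ k with hn
  have hgn : g ^ n = 1 := by rw [← hg]; exact pow_orderOf_eq_one g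
  obtain ⟨i, hik, hi⟩ := (Nat.dvd_prime_pow hp).mp (Nat.gcd_dvd_right a n)
  obtain ⟨j, hjk, hj⟩ := (Nat.dvd_prime_pow hp).mp (Nat.gcd_dvd_right b n)
  rcases le_total i j with h | h
  · right
    refine aux_mem_zpowers_of_gcd g b a n hgn ?_
    calc Nat.gcd a n = p ^ i := hi
    _ ∣ p ^ j := pow_dvd_pow p h
    _ = Nat.gcd b n := hj.symm
    _ ∣ b := Nat.gcd_dvd_left b n
  · left
    refine aux_mem_zpowers_of_gcd g a b n hgn ?_
    calc Nat.gcd b n = p ^ j := hj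
    _ ∣ p ^ i := pow_dvd_pow p h
    _ = Nat.gcd a n := hi.symm
    _ ∣ a := Nat.gcd_dvd_left a n

lemma aux_orderOf_prime_pow [Finite G₀]
    (h : ∀ p q : ℕ, p.Prime → q.Prime → p ≠ q → ∀ x : G₀, orderOf x ≠ p * q) (g : G₀) :
    ∃ p k : ℕ, p.Prime ∧ orderOf g = p ^ k := by
  set n := orderOf g with hn
  have hn0 : 0 < n := (isOfFinOrder_of_finite g).orderOf_pos
  rcases eq_or_ne n 1 with h1 | h1
  · exact ⟨2, 0, Nat.prime_two, by rw [h1, pow_zero]⟩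
  set p := n.minFac with hpdef
  have hp : p.Prime := Nat.minFac_prime h1
  have key : ∀ {d : ℕ}, d.Prime → d ∣ n → d = p := by
    intro q hq hqd
    by_contra hne
    have hcop : Nat.Coprime p q := (Nat.coprime_primes hp hq).mpr (Ne.symm hne)
    have hpq : p * q ∣ n := hcop.mul_dvd_of_dvd_of_dvd (Nat.minFac_dvd n) hqd
    have horder : orderOf (g ^ (n / (p * q))) = p * q := by
      rw [orderOf_pow, ← hn]
      rw [Nat.gcd_eq_right (Nat.div_dvd_of_dvd hpq)]
      exact Nat.div_div_self hpq hn0.ne'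
    exact h p q hp hq (Ne.symm hne) _ horder
  exact ⟨p, n.primeFactorsList.length, hp, Nat.eq_prime_pow_of_unique_prime_dvd hn0.ne' key⟩

lemma aux_closure_pair_eq_zpowers {x y : G₀} (h : x ∈ Subgroup.zpowers y) :
    Subgroup.closure ({x, y} : Set G₀) = Subgroup.zpowers y := by
  apply le_antisymm
  · rw [Subgroup.closure_le]
    rintro z (rfl | rfl)
    · exact h
    · exact Subgroup.mem_zpowers _
  · rw [Subgroup.zpowers_le]
    exact Subgroup.subset_closure (by simp)

end AuxLemmas

/-- For a finite group `G`, the power graph equals the enhanced power graph iff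
`G` has no element of order `p * q` for distinct primes `p`, `q`. -/
theorem powGraph_eq_epowGraph_iff (G : Type*) [Group G] [Finite G] :
    powGraph G = epowGraph G ↔
    ∀ p q : ℕ, p.Prime → q.Prime → p ≠ q → ∀ x : G, orderOf x ≠ p * q := by
  constructor
  · intro hG p q hp hq hne x hx
    have hadj : ∀ a b : G, (powGraph G).Adj a b ↔ (epowGraph G).Adj a b := by
      intro a b; rw [hG]
    set a := x ^ p with ha
    set b := x ^ q with hb
    have hoa : orderOf a = q := by
      rw [ha, orderOf_pow, hx, Nat.gcd_comm, Nat.gcd_eq_left (dvd_mul_right p q),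
        Nat.mul_div_cancel_left q hp.pos]
    have hob : orderOf b = p := by
      rw [hb, orderOf_pow, hx, Nat.gcd_comm, Nat.gcd_eq_left (dvd_mul_left q p),
        Nat.mul_div_cancel (m := p) hq.pos]
    have hab : a ≠ b := by
      intro h; apply hne; rw [← hob, ← hoa, h]
    -- a and b are adjacent in the enhanced power graph
    have hclosure : Subgroup.closure ({a, b} : Set G) = Subgroup.zpowers x := by
      apply le_antisymm
      · rw [Subgroup.closure_le]
        rintro z (rfl | rfl)
        · exact Subgroup.npow_mem_zpowers x p
        · exact Subgroup.npow_mem_zpowers x q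
      · rw [Subgroup.zpowers_le]
        have hcop : Nat.Coprime p q := (Nat.coprime_primes hp hq).mpr hne
        have hbez : (1 : ℤ) = p * Nat.gcdA p q + q * Nat.gcdB p q := by
          have := Nat.gcd_eq_gcd_ab p q
          rwa [Nat.Coprime.gcd_eq_one hcop, Nat.cast_one] at this
        have hxval : x = a ^ (Nat.gcdA p q) * b ^ (Nat.gcdB p q) := by
          rw [ha, hb, ← zpow_natCast x p, ← zpow_natCast x q, ← zpow_mul, ← zpow_mul,
            ← zpow_add, ← hbez, zpow_one]
        rw [hxval]
        exact mul_mem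
          (Subgroup.zpow_mem _ (Subgroup.subset_closure (by simp)) _)
          (Subgroup.zpow_mem _ (Subgroup.subset_closure (by simp)) _)
    have hepow : (epowGraph G).Adj a b := by
      refine ⟨hab, ?_⟩
      rw [hclosure]
      exact aux_zpowers_isCyclic x
    have hpow : (powGraph G).Adj a b := (hadj a b).mpr hepow
    rcases hpow.2 with h | h
    · have : orderOf a ∣ orderOf b := orderOf_dvd_of_mem_zpowers h
      rw [hoa, hob] at this
      exact hne ((Nat.prime_dvd_prime_iff_eq hq hp).mp this).symm
    · have : orderOf b ∣ orderOf a := orderOf_dvd_of_mem_zpowers h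
      rw [hoa, hob] at this
      exact hne ((Nat.prime_dvd_prime_iff_eq hp hq).mp this)
  · intro h
    ext x y
    show (x ≠ y ∧ (x ∈ Subgroup.zpowers y ∨ y ∈ Subgroup.zpowers x)) ↔
      (x ≠ y ∧ IsCyclic (Subgroup.closure ({x, y} : Set G)))
    refine and_congr_right fun hxy => ⟨?_, ?_⟩
    · rintro (hm | hm)
      · rw [aux_closure_pair_eq_zpowers hm]
        exact aux_zpowers_isCyclic y
      · rw [Set.pair_comm, aux_closure_pair_eq_zpowers hm]
        exact aux_zpowers_isCyclic x
    · intro hcyc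
      obtain ⟨⟨g, hgH⟩, hgen⟩ := hcyc.exists_generator
      have hx : x ∈ Subgroup.closure ({x, y} : Set G) := Subgroup.subset_closure (by simp)
      have hy : y ∈ Subgroup.closure ({x, y} : Set G) := Subgroup.subset_closure (by simp)
      have hxg : x ∈ Subgroup.zpowers g := by
        obtain ⟨k, hk⟩ := hgen ⟨x, hx⟩
        exact ⟨k, congrArg Subtype.val hk⟩
      have hyg : y ∈ Subgroup.zpowers g := by
        obtain ⟨k, hk⟩ := hgen ⟨y, hy⟩
        exact ⟨k, congrArg Subtype.val hk⟩
      obtain ⟨p, k, hp, hg⟩ := aux_orderOf_prime_pow h g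
      exact aux_zpowers_comparable hp hg hxg hyg
end

section
/- Let G be a finite group. The enhanced power graph of G is equal to the commuting graph of G (i.e., they have the same edge set) if and only if G contains no subgroup isomorphic to C_p × C_p for any prime p. -/
open SimpleGraph

section Tors
variable {A : Type*} [CommGroup A]

def torsSub (A : Type*) [CommGroup A] (n : ℕ) : Subgroup A where
  carrier := {a | a ^ n = 1}
  one_mem' := one_pow n
  mul_mem' := fun {a b} ha hb => by
    simp only [Set.mem_setOf_eq] at *
    rw [mul_pow, ha, hb, one_mul]
  inv_mem' := fun {a} ha => by
    simp only [Set.mem_setOf_eq] at *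
    rw [inv_pow, ha, inv_one]

lemma mem_torsSub {n : ℕ} {a : A} : a ∈ torsSub A n ↔ a ^ n = 1 := Iff.rfl

lemma card_torsSub_le [Finite A]
    (h : ∀ p : ℕ, p.Prime → Nat.card (torsSub A p) ≤ p) :
    ∀ n : ℕ, 0 < n → Nat.card (torsSub A n) ≤ n := by
  intro n
  induction n using Nat.strong_induction_on with
  | _ n ih =>
    intro hn
    rcases eq_or_lt_of_le (show 1 ≤ n from hn) with h1 | h1
    · have hb : torsSub A 1 = ⊥ := by
        ext a; simp [mem_torsSub, Subgroup.mem_bot]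
      rw [← h1, hb, Subgroup.card_bot]
    · have hn1 : n ≠ 1 := by omega
      set p := n.minFac with hp
      have hpp : p.Prime := Nat.minFac_prime hn1
      have hpd : p ∣ n := Nat.minFac_dvd n
      set m := n / p with hm
      have hmp : m * p = n := Nat.div_mul_cancel hpd
      have hm0 : 0 < m := Nat.div_pos (Nat.le_of_dvd hn hpd) hpp.pos
      have hmn : m < n := Nat.div_lt_self hn hpp.one_lt
      set f : torsSub A n →* A := (powMonoidHom m).comp (torsSub A n).subtype with hf
      have hcard : Nat.card (torsSub A n) = Nat.card (torsSub A n ⧸ f.ker) * Nat.card f.ker :=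
        Subgroup.card_eq_card_quotient_mul_card_subgroup f.ker
      have hq : Nat.card (torsSub A n ⧸ f.ker) = Nat.card f.range :=
        Nat.card_congr (QuotientGroup.quotientKerEquivRange f).toEquiv
      have hrange : f.range ≤ torsSub A p := by
        rintro _ ⟨⟨a, ha⟩, rfl⟩
        simp only [hf, MonoidHom.comp_apply, powMonoidHom_apply, Subgroup.coe_subtype,
          mem_torsSub]
        rw [← pow_mul, hmp]
        exact ha
      have h2 : Nat.card f.range ≤ p :=
        le_trans (Subgroup.card_le_of_le hrange) (h p hpp)
      have h3 : Nat.card f.ker ≤ Nat.card (torsSub A m) := by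
        apply Nat.card_le_card_of_injective
          (fun z : f.ker => (⟨((z : torsSub A n) : A), z.2⟩ : torsSub A m))
        intro a b hab
        simp only [Subtype.mk.injEq] at hab
        exact Subtype.ext (Subtype.ext (Subtype.mk.inj hab :))
      calc Nat.card (torsSub A n) = Nat.card f.range * Nat.card f.ker := by rw [hcard, hq]
        _ ≤ p * m := Nat.mul_le_mul h2 (le_trans h3 (ih m hmn hm0))
        _ = n := by rw [mul_comm]; exact hmp

lemma isCyclic_of_torsSub_le [Finite A]
    (h : ∀ p : ℕ, p.Prime → Nat.card (torsSub A p) ≤ p) : IsCyclic A := by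
  classical
  cases nonempty_fintype A
  apply isCyclic_of_card_pow_eq_one_le
  intro n hn
  have key : Nat.card (torsSub A n) ≤ n := card_torsSub_le h n hn
  have key2 : Nat.card {a : A // a ^ n = 1} ≤ n := by
    refine le_trans (le_of_eq (Nat.card_congr (Equiv.subtypeEquivRight fun a => ?_))) key
    exact Iff.rfl
  rw [Nat.card_eq_fintype_card] at key2
  rw [show (Finset.filter (fun a : A => a ^ n = 1) Finset.univ).card
      = Fintype.card {a : A // a ^ n = 1} by rw [Fintype.card_subtype]]
  exact key2

end Tors


section Cp2
variable {G : Type*} [Group G] [Finite G]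

lemma exists_cp2 {p : ℕ} (hp : p.Prime) {x y : G} (hc : Commute x y)
    (hx : orderOf x = p) (hy : orderOf y = p) (hxy : y ∉ Subgroup.zpowers x) :
    ∃ H : Subgroup G, Nonempty (H ≃* Multiplicative (ZMod p × ZMod p)) := by
  haveI : Fact p.Prime := ⟨hp⟩
  haveI : NeZero p := ⟨hp.pos.ne'⟩
  have hmod : ∀ (g : G), orderOf g = p → ∀ a b : ZMod p,
      g ^ (a + b).val = g ^ a.val * g ^ b.val := by
    intro g hg a b
    rw [← pow_add, pow_eq_pow_iff_modEq, hg, Nat.ModEq, ZMod.val_add, Nat.mod_mod_of_dvd]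
    exact dvd_refl p
  set φ : Multiplicative (ZMod p × ZMod p) →* G :=
    { toFun := fun a => x ^ (a.toAdd.1).val * y ^ (a.toAdd.2).val
      map_one' := by simp
      map_mul' := by
        intro a b
        simp only [toAdd_mul, Prod.fst_add, Prod.snd_add]
        rw [hmod x hx, hmod y hy]
        exact ((hc.pow_pow (b.toAdd.1).val (a.toAdd.2).val).mul_mul_mul_comm _ _) } with hφ
  have hinj : Function.Injective φ := by
    rw [injective_iff_map_eq_one]
    intro a ha
    have ha' : x ^ (a.toAdd.1).val * y ^ (a.toAdd.2).val = 1 := ha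
    have h1 : x ^ (a.toAdd.1).val ∈ Subgroup.zpowers x :=
      Subgroup.pow_mem _ (Subgroup.mem_zpowers x) _
    have h2 : x ^ (a.toAdd.1).val ∈ Subgroup.zpowers y := by
      have he : x ^ (a.toAdd.1).val = (y ^ (a.toAdd.2).val)⁻¹ := by
        rw [eq_inv_iff_mul_eq_one]; exact ha'
      rw [he]
      exact Subgroup.inv_mem _ (Subgroup.pow_mem _ (Subgroup.mem_zpowers y) _)
    have hx1 : x ^ (a.toAdd.1).val = 1 := by
      by_contra hne
      have hzp : orderOf (x ^ (a.toAdd.1).val) = p := by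
        have hxp : x ^ p = 1 := by rw [← hx]; exact pow_orderOf_eq_one x
        have hdvd : orderOf (x ^ (a.toAdd.1).val) ∣ p := by
          apply orderOf_dvd_of_pow_eq_one
          rw [← pow_mul, mul_comm, pow_mul, hxp, one_pow]
        rcases (Nat.Prime.eq_one_or_self_of_dvd hp _ hdvd) with h1' | h1'
        · exact absurd (orderOf_eq_one_iff.mp h1') hne
        · exact h1'
      have heq : Subgroup.zpowers (x ^ (a.toAdd.1).val) = Subgroup.zpowers y := by
        apply Subgroup.eq_of_le_of_card_ge (Subgroup.zpowers_le.mpr h2)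
        rw [Nat.card_zpowers, Nat.card_zpowers, hzp, hy]
      exact hxy (Subgroup.zpowers_le.mpr h1 (heq ▸ Subgroup.mem_zpowers y))
    have ha1 : (a.toAdd.1) = 0 := by
      rw [← ZMod.val_eq_zero]
      have hdvd := orderOf_dvd_of_pow_eq_one hx1
      rw [hx] at hdvd
      exact Nat.eq_zero_of_dvd_of_lt hdvd (ZMod.val_lt _)
    have hy1 : y ^ (a.toAdd.2).val = 1 := by
      rw [hx1, one_mul] at ha'
      exact ha'
    have ha2 : (a.toAdd.2) = 0 := by
      rw [← ZMod.val_eq_zero]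
      have hdvd := orderOf_dvd_of_pow_eq_one hy1
      rw [hy] at hdvd
      exact Nat.eq_zero_of_dvd_of_lt hdvd (ZMod.val_lt _)
    rw [← toAdd_eq_zero]
    exact Prod.ext ha1 ha2
  exact ⟨φ.range, ⟨(MonoidHom.ofInjective hinj).symm⟩⟩

end Cp2


section Main
variable {G : Type*} [Group G] [Finite G]

open Subgroup

lemma commute_closure_isCyclic
    (h : ∀ p : ℕ, p.Prime →
      ¬ ∃ H : Subgroup G, Nonempty (H ≃* Multiplicative (ZMod p × ZMod p)))
    {x y : G} (hc : Commute x y) :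
    IsCyclic (Subgroup.closure ({x, y} : Set G)) := by
  set K := Subgroup.closure ({x, y} : Set G) with hK
  have hcomm : ∀ a ∈ ({x, y} : Set G), ∀ b ∈ ({x, y} : Set G), a * b = b * a := by
    rintro a (rfl | rfl) b (rfl | rfl)
    · rfl
    · exact hc
    · exact hc.symm
    · rfl
  letI : CommGroup K := Subgroup.closureCommGroupOfComm hcomm
  have hKcomm : ∀ a b : G, a ∈ K → b ∈ K → Commute a b := fun a b ha hb =>
    congrArg Subtype.val (mul_comm (⟨a, ha⟩ : K) (⟨b, hb⟩ : K))
  apply isCyclic_of_torsSub_le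
  intro p hp
  by_contra hlt
  push_neg at hlt
  haveI : Fact p.Prime := ⟨hp⟩
  apply h p hp
  set T : Subgroup G := (torsSub K p).map K.subtype with hT
  have hcardT : Nat.card T = Nat.card (torsSub K p) :=
    (Nat.card_congr ((torsSub K p).equivMapOfInjective K.subtype K.subtype_injective).toEquiv).symm
  have hTpow : ∀ g ∈ T, g ^ p = 1 := by
    rintro g ⟨⟨g', hg'⟩, hmem, rfl⟩
    have : ((⟨g', hg'⟩ : K) ^ p : K) = 1 := hmem
    exact congrArg Subtype.val this
  have hTK : T ≤ K := Subgroup.map_subtype_le _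
  have hpT : p < Nat.card T := by rw [hcardT]; exact hlt
  have hTnontriv : Nontrivial T := by
    apply Finite.one_lt_card_iff_nontrivial.mp
    exact lt_trans hp.one_lt hpT
  obtain ⟨u, huT, hu1⟩ := (Subgroup.nontrivial_iff_exists_ne_one T).mp hTnontriv
  have hou : orderOf u = p := orderOf_eq_prime (hTpow u huT) hu1
  have hzu : Subgroup.zpowers u ≤ T := Subgroup.zpowers_le.mpr huT
  have hzlt : Subgroup.zpowers u < T := by
    apply lt_of_le_of_ne hzu
    intro heq
    rw [← heq, Nat.card_zpowers, hou] at hpT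
    exact lt_irrefl p hpT
  obtain ⟨v, hvT, hvz⟩ := SetLike.exists_of_lt hzlt
  have hv1 : v ≠ 1 := fun hv => hvz (hv ▸ (Subgroup.zpowers u).one_mem)
  have hov : orderOf v = p := orderOf_eq_prime (hTpow v hvT) hv1
  have hcuv : Commute u v := hKcomm u v (hTK huT) (hTK hvT)
  exact exists_cp2 hp hcuv hou hov hvz

end Main


open Subgroup

lemma not_isCyclic_mult_zmod_sq {p : ℕ} (hp : p.Prime) :
    ¬ IsCyclic (Multiplicative (ZMod p × ZMod p)) := by
  haveI : Fact p.Prime := ⟨hp⟩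
  haveI : NeZero p := ⟨hp.pos.ne'⟩
  intro hcyc
  obtain ⟨g, hg⟩ := hcyc.exists_generator
  have hcard : Nat.card (Multiplicative (ZMod p × ZMod p)) = p * p := by
    rw [Nat.card_congr (Multiplicative.toAdd (α := ZMod p × ZMod p)), Nat.card_prod,
      Nat.card_zmod]
  have htop : Subgroup.zpowers g = ⊤ := (Subgroup.eq_top_iff' _).mpr hg
  have horder : orderOf g = p * p := by
    rw [← Nat.card_zpowers, htop, ← hcard]
    exact Subgroup.card_top
  have hgp : g ^ p = 1 := by
    apply Multiplicative.toAdd.injective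
    rw [toAdd_pow]
    show p • g.toAdd = (0 : ZMod p × ZMod p)
    have h1 : p • g.toAdd.1 = 0 := by
      rw [nsmul_eq_mul, ZMod.natCast_self, zero_mul]
    have h2 : p • g.toAdd.2 = 0 := by
      rw [nsmul_eq_mul, ZMod.natCast_self, zero_mul]
    rw [Prod.ext_iff]
    exact ⟨h1, h2⟩
  have hdvd := orderOf_dvd_of_pow_eq_one hgp
  rw [horder] at hdvd
  have hle := Nat.le_of_dvd hp.pos hdvd
  nlinarith [hp.two_le]


/-- For a finite group `G`, the enhanced power graph equals the commuting graph iff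
`G` has no subgroup isomorphic to `C_p × C_p` for any prime `p`. -/
theorem epowGraph_eq_comGraph_iff (G : Type*) [Group G] [Finite G] :
    epowGraph G = comGraph G ↔
    ∀ p : ℕ, p.Prime →
      ¬ ∃ H : Subgroup G, Nonempty (H ≃* Multiplicative (ZMod p × ZMod p)) := by
  constructor
  · intro heq p hp hex
    obtain ⟨H, ⟨e⟩⟩ := hex
    haveI : Fact p.Prime := ⟨hp⟩
    haveI : NeZero p := ⟨hp.pos.ne'⟩
    set u : H := e.symm (Multiplicative.ofAdd ((1 : ZMod p), (0 : ZMod p))) with hu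
    set v : H := e.symm (Multiplicative.ofAdd ((0 : ZMod p), (1 : ZMod p))) with hv
    set x : G := (u : G) with hxdef
    set y : G := (v : G) with hydef
    have hxy : x ≠ y := by
      intro hh
      have h2 : u = v := Subtype.ext hh
      have h3 := congrArg Multiplicative.toAdd (e.symm.injective h2)
      simp only [toAdd_ofAdd] at h3
      exact one_ne_zero (congrArg Prod.fst h3)
    have hcom : Commute x y := by
      have h2 : u * v = v * u := e.injective (by rw [map_mul, map_mul, mul_comm])
      exact congrArg Subtype.val h2
    have hadj : (comGraph G).Adj x y := ⟨hxy, hcom⟩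
    rw [← heq] at hadj
    obtain ⟨-, hcyc⟩ := hadj
    have hxK : x ∈ Subgroup.closure ({x, y} : Set G) :=
      Subgroup.subset_closure (Set.mem_insert _ _)
    have hyK : y ∈ Subgroup.closure ({x, y} : Set G) :=
      Subgroup.subset_closure (Set.mem_insert_of_mem _ rfl)
    have key : ∀ c : ZMod p × ZMod p,
        c.1.val • ((1 : ZMod p), (0 : ZMod p)) + c.2.val • ((0 : ZMod p), (1 : ZMod p)) = c := by
      intro c
      have h1 : ((c.1.val : ZMod p)) = c.1 := ZMod.natCast_rightInverse c.1
      have h2 : ((c.2.val : ZMod p)) = c.2 := ZMod.natCast_rightInverse c.2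
      simp [Prod.ext_iff, nsmul_eq_mul, h1, h2]
    have hKH : Subgroup.closure ({x, y} : Set G) = H := by
      apply le_antisymm
      · apply (Subgroup.closure_le _).mpr
        rintro a (rfl | rfl)
        exacts [u.2, v.2]
      · intro g hg
        have hw : (⟨g, hg⟩ : H)
            = u ^ ((e ⟨g, hg⟩).toAdd.1).val * v ^ ((e ⟨g, hg⟩).toAdd.2).val := by
          apply e.injective
          rw [map_mul, map_pow, map_pow, hu, hv, MulEquiv.apply_symm_apply,
            MulEquiv.apply_symm_apply]
          apply Multiplicative.toAdd.injective
          rw [toAdd_mul, toAdd_pow, toAdd_pow, toAdd_ofAdd, toAdd_ofAdd]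
          exact (key (e ⟨g, hg⟩).toAdd).symm
        have hg' : g = x ^ ((e ⟨g, hg⟩).toAdd.1).val * y ^ ((e ⟨g, hg⟩).toAdd.2).val :=
          congrArg Subtype.val hw
        rw [hg']
        exact mul_mem (pow_mem hxK _) (pow_mem hyK _)
    rw [hKH] at hcyc
    exact not_isCyclic_mult_zmod_sq hp (isCyclic_of_surjective e e.surjective)
  · intro h
    ext x y
    show (x ≠ y ∧ IsCyclic (Subgroup.closure ({x, y} : Set G))) ↔ (x ≠ y ∧ Commute x y)
    constructor
    · rintro ⟨hne, hcyc⟩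
      refine ⟨hne, ?_⟩
      letI := hcyc.commGroup
      have hxK : x ∈ Subgroup.closure ({x, y} : Set G) :=
        Subgroup.subset_closure (Set.mem_insert _ _)
      have hyK : y ∈ Subgroup.closure ({x, y} : Set G) :=
        Subgroup.subset_closure (Set.mem_insert_of_mem _ rfl)
      exact congrArg Subtype.val
        (mul_comm (⟨x, hxK⟩ : Subgroup.closure ({x, y} : Set G)) ⟨y, hyK⟩)
    · rintro ⟨hne, hcom⟩
      exact ⟨hne, commute_closure_isCyclic h hcom⟩
end

section
/- Let G₁ and G₂ be finite groups whose commuting graphs are isomorphic as simple graphs. Then G₁ and G₂ have the same order (hence the same set of prime divisors of the order), and for all distinct primes p and q, G₁ contains an element of order pq if and only if G₂ contains an element of order pq; that is, the Gruenberg–Kegel graphs of G₁ and G₂ are equal. -/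
open SimpleGraph

/-- A maximal clique (as a set of vertices pairwise equal-or-adjacent, maximal under the
"commutes with everything" extension property). -/
def IsMaxCl {V : Type*} (H : SimpleGraph V) (S : Set V) : Prop :=
  (∀ x ∈ S, ∀ y ∈ S, x = y ∨ H.Adj x y) ∧ ∀ z : V, (∀ x ∈ S, z = x ∨ H.Adj z x) → z ∈ S

lemma IsMaxCl.map {V W : Type*} {H : SimpleGraph V} {H' : SimpleGraph W} (e : H ≃g H')
    {S : Set V} (hS : IsMaxCl H S) : IsMaxCl H' (e '' S) := by
  constructor
  · rintro _ ⟨x, hx, rfl⟩ _ ⟨y, hy, rfl⟩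
    rcases hS.1 x hx y hy with h | h
    · exact Or.inl (by rw [h])
    · exact Or.inr ((e.map_adj_iff).2 h)
  · intro z hz
    have hz' : ∀ x ∈ S, e.symm z = x ∨ H.Adj (e.symm z) x := by
      intro x hx
      rcases hz (e x) ⟨x, hx, rfl⟩ with h | h
      · left; rw [h]; simp
      · right
        have := (e.symm.map_adj_iff (v := z) (w := e x)).2 h
        simpa using this
    have := hS.2 _ hz'
    exact ⟨e.symm z, this, by simp⟩

/-- In the commuting graph, a maximal clique is (the carrier of) an abelian subgroup. -/
lemma maxCl_subgroup {G : Type*} [Group G] {S : Set G} (hS : IsMaxCl (comGraph G) S) :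
    ∃ A : Subgroup G, (A : Set G) = S ∧ ∀ a ∈ A, ∀ b ∈ A, Commute a b := by
  have hcomm : ∀ x ∈ S, ∀ y ∈ S, Commute x y := by
    intro x hx y hy
    rcases hS.1 x hx y hy with h | h
    · rw [h]
    · exact h.2
  have hmem : ∀ z : G, (∀ x ∈ S, Commute z x) → z ∈ S := by
    intro z hz
    refine hS.2 z fun x hx => ?_
    by_cases hzx : z = x
    · exact Or.inl hzx
    · exact Or.inr ⟨hzx, hz x hx⟩
  refine ⟨{ carrier := S
            one_mem' := hmem 1 fun x _ => Commute.one_left x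
            mul_mem' := by
              intro a b ha hb
              exact hmem _ fun x hx => (hcomm a ha x hx).mul_left (hcomm b hb x hx)
            inv_mem' := by
              intro a ha
              exact hmem _ fun x hx => (hcomm a ha x hx).inv_left }, rfl, ?_⟩
  intro a ha b hb
  exact hcomm a ha b hb

/-- Existence of a maximal clique containing a given commuting set. -/
lemma exists_maxCl {G : Type*} [Group G] [Finite G] (T : Set G)
    (hT : ∀ x ∈ T, ∀ y ∈ T, Commute x y) :
    ∃ S : Set G, T ⊆ S ∧ IsMaxCl (comGraph G) S := by
  have : Finite (Set G) := inferInstance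
  set 𝒮 : Set (Set G) := {U | T ⊆ U ∧ ∀ x ∈ U, ∀ y ∈ U, Commute x y} with h𝒮
  have hTS : T ∈ 𝒮 := ⟨subset_rfl, hT⟩
  obtain ⟨S, hS, hmax⟩ := Set.Finite.exists_maximalFor (fun U : Set G => U.ncard) 𝒮
    (Set.toFinite _) ⟨T, hTS⟩
  refine ⟨S, hS.1, ?_, ?_⟩
  · intro x hx y hy
    by_cases hxy : x = y
    · exact Or.inl hxy
    · exact Or.inr ⟨hxy, hS.2 x hx y hy⟩
  · intro z hz
    by_contra hzS
    have hcz : ∀ x ∈ S, Commute z x := by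
      intro x hx
      rcases hz x hx with h | h
      · rw [h]
      · exact h.2
    have hins : insert z S ∈ 𝒮 := by
      refine ⟨hS.1.trans (Set.subset_insert _ _), ?_⟩
      rintro x (rfl | hx) y (rfl | hy)
      · rfl
      · exact hcz y hy
      · exact (hcz x hx).symm
      · exact hS.2 x hx y hy
    have hlt : S.ncard < (insert z S).ncard := by
      rw [Set.ncard_insert_of_notMem hzS (Set.toFinite S)]
      omega
    exact absurd (hmax hins hlt.le) hlt.not_ge

/-- Graph-theoretic characterisation of having an element of order `p*q`. -/
lemma elem_order_iff_maxCl {G : Type*} [Group G] [Finite G] {p q : ℕ}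
    (hp : p.Prime) (hq : q.Prime) (hpq : p ≠ q) :
    (∃ x : G, orderOf x = p * q) ↔
      ∃ S : Set G, IsMaxCl (comGraph G) S ∧ p * q ∣ Nat.card S := by
  constructor
  · rintro ⟨x, hx⟩
    obtain ⟨S, hsub, hS⟩ := exists_maxCl (Subgroup.zpowers x : Set G) (by
      rintro _ ⟨m, rfl⟩ _ ⟨n, rfl⟩
      exact Commute.zpow_zpow (Commute.refl x) m n)
    obtain ⟨A, hA, -⟩ := maxCl_subgroup hS
    refine ⟨S, hS, ?_⟩
    have hle : Subgroup.zpowers x ≤ A := by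
      intro g hg
      have : g ∈ (A : Set G) := hA ▸ hsub hg
      exact this
    have h1 : p * q ∣ Nat.card (Subgroup.zpowers x) := by
      rw [Nat.card_zpowers, hx]
    have h2 : Nat.card (Subgroup.zpowers x) ∣ Nat.card A := Subgroup.card_dvd_of_le hle
    have : Nat.card A = Nat.card S := by rw [← hA]; rfl
    exact this ▸ h1.trans h2
  · rintro ⟨S, hS, hdvd⟩
    obtain ⟨A, hA, hcomm⟩ := maxCl_subgroup hS
    have hcard : p * q ∣ Nat.card A := by
      have : Nat.card A = Nat.card S := by rw [← hA]; rfl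
      rw [this]; exact hdvd
    haveI : Fact p.Prime := ⟨hp⟩
    haveI : Fact q.Prime := ⟨hq⟩
    obtain ⟨a, ha⟩ := exists_prime_orderOf_dvd_card' (G := A) p
      (dvd_trans (Dvd.intro q rfl) hcard)
    obtain ⟨b, hb⟩ := exists_prime_orderOf_dvd_card' (G := A) q
      (dvd_trans (Dvd.intro_left p rfl) hcard)
    have hc : Commute a b := Subtype.ext (hcomm a a.2 b b.2)
    have : orderOf (a * b) = p * q := by
      rw [hc.orderOf_mul_eq_mul_orderOf_of_coprime (by
        rw [ha, hb]; exact (Nat.coprime_primes hp hq).2 hpq), ha, hb]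
    exact ⟨(a * b : A), by rw [Subgroup.orderOf_coe]; exact this⟩

/-- Finite groups with isomorphic commuting graphs have the same order and equal
Gruenberg–Kegel graphs: for distinct primes `p`,`q`, one group has an element of order `p*q`
iff the other does. -/
theorem comGraph_iso_implies_GK_eq (G₁ G₂ : Type*) [Group G₁] [Finite G₁] [Group G₂] [Finite G₂]
    (h : Nonempty (comGraph G₁ ≃g comGraph G₂)) :
    Nat.card G₁ = Nat.card G₂ ∧
    ∀ p q : ℕ, p.Prime → q.Prime → p ≠ q →
      ((∃ x : G₁, orderOf x = p * q) ↔ (∃ y : G₂, orderOf y = p * q)) := by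
  obtain ⟨e⟩ := h
  refine ⟨Nat.card_congr e.toEquiv, ?_⟩
  intro p q hp hq hpq
  rw [elem_order_iff_maxCl hp hq hpq, elem_order_iff_maxCl hp hq hpq]
  constructor
  · rintro ⟨S, hS, hd⟩
    exact ⟨e '' S, hS.map e, by
      rwa [Nat.card_image_of_injective e.injective]⟩
  · rintro ⟨S, hS, hd⟩
    exact ⟨e.symm '' S, hS.map e.symm, by
      rwa [Nat.card_image_of_injective e.symm.injective]⟩
end

section
/- Let G be a finite group and let m be the clique number of the power graph of G. Then the clique number of the enhanced power graph of G is at most the least common multiple of the integers 1, 2, …, m. -/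
open SimpleGraph

section Aux
open Subgroup
set_option linter.unusedSectionVars false
variable {G : Type*} [Group G] [Finite G]

/-- In a finite group, inside a cyclic subgroup `zpowers c`, order divisibility gives
membership. -/
lemma aux_mem_zpowers_of_orderOf_dvd {c y z : G} (hy : y ∈ zpowers c) (hz : z ∈ zpowers c)
    (hd : orderOf y ∣ orderOf z) : y ∈ zpowers z := by
  classical
  have := Fintype.ofFinite G
  set K := zpowers c with hK
  haveI : IsCyclic K := by
    refine ⟨⟨⟨c, mem_zpowers c⟩, fun x => ?_⟩⟩
    obtain ⟨k, hk⟩ := x.2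
    exact ⟨k, Subtype.ext (by simpa using hk)⟩
  set d := orderOf z with hdd
  have hd0 : 0 < d := (orderOf_pos z)
  have hcard := IsCyclic.card_pow_eq_one_le (α := K) (n := d) hd0
  set zK : K := ⟨z, hz⟩ with hzK
  set yK : K := ⟨y, hy⟩ with hyK
  have hzd : orderOf zK = d := by rw [hdd, hzK, Subgroup.orderOf_mk]
  have hsub : ((zpowers zK : Set K).toFinset : Finset K) ⊆
      ({a : K | a ^ d = 1} : Finset K) := by
    intro a ha
    rw [Set.mem_toFinset] at ha
    simp only [Finset.mem_filter, Finset.mem_univ, true_and, Set.mem_setOf_eq]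
    exact orderOf_dvd_iff_pow_eq_one.mp (hzd ▸ orderOf_dvd_of_mem_zpowers ha)
  have hcard1 : ((zpowers zK : Set K).toFinset).card = d := by
    rw [Set.toFinset_card]
    simp only [SetLike.coe_sort_coe, ← Nat.card_eq_fintype_card, Nat.card_zpowers]
    exact hzd
  have heq := Finset.eq_of_subset_of_card_le hsub (by rw [hcard1]; exact hcard)
  have hymem : yK ∈ ({a : K | a ^ d = 1} : Finset K) := by
    simp only [Finset.mem_filter, Finset.mem_univ, true_and, Set.mem_setOf_eq]
    refine orderOf_dvd_iff_pow_eq_one.mp ?_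
    rwa [hyK, Subgroup.orderOf_mk]
  rw [← heq, Set.mem_toFinset] at hymem
  obtain ⟨k, hk⟩ := hymem
  exact ⟨k, by simpa using congrArg (Subtype.val) hk⟩

lemma aux_orderOf_le_cliqueNum {p k : ℕ} (hp : p.Prime) {w : G} (hw : orderOf w = p ^ k) :
    orderOf w ≤ (powGraph G).cliqueNum := by
  classical
  have := Fintype.ofFinite G
  set T : Finset G := (zpowers w : Set G).toFinset with hT
  have hclique : (powGraph G).IsClique T := by
    intro y hy z hz hyz
    rw [hT, Finset.mem_coe, Set.mem_toFinset] at hy hz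
    refine (⟨hyz, ?_⟩ : _ ∧ _)
    obtain ⟨i, hi, hoy⟩ := (Nat.dvd_prime_pow hp).mp (hw ▸ orderOf_dvd_of_mem_zpowers hy)
    obtain ⟨j, hj, hoz⟩ := (Nat.dvd_prime_pow hp).mp (hw ▸ orderOf_dvd_of_mem_zpowers hz)
    rcases le_total i j with h | h
    · exact Or.inl (aux_mem_zpowers_of_orderOf_dvd hy hz
        (by rw [hoy, hoz]; exact pow_dvd_pow p h))
    · exact Or.inr (aux_mem_zpowers_of_orderOf_dvd hz hy
        (by rw [hoy, hoz]; exact pow_dvd_pow p h))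
  have hcard : T.card = orderOf w := by
    rw [hT, Set.toFinset_card]
    simp only [SetLike.coe_sort_coe, ← Nat.card_eq_fintype_card, Nat.card_zpowers]
  calc orderOf w = T.card := hcard.symm
    _ ≤ _ := hclique.card_le_cliqueNum

lemma aux_commute_closure {S : Set G} (hS : ∀ x ∈ S, ∀ y ∈ S, Commute x y) :
    ∀ g ∈ Subgroup.closure S, ∀ h ∈ Subgroup.closure S, Commute g h := by
  intro g hg h hh
  induction hg, hh using Subgroup.closure_induction₂ with
  | mem x y hx hy => exact hS x hx y hy
  | one_left x hx => exact Commute.one_left x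
  | one_right x hx => exact Commute.one_right x
  | mul_left x y z hx hy hz h1 h2 => exact h1.mul_left h2
  | mul_right y z x hy hz hx h1 h2 => exact h1.mul_right h2
  | inv_left x y hx hy h1 => exact h1.inv_left
  | inv_right x y hx hy h1 => exact h1.inv_right

lemma aux_clique_card_le {C : Finset G} (hC : (epowGraph G).IsClique C) :
    C.card ≤ (Finset.Icc 1 ((powGraph G).cliqueNum)).lcm id := by
  classical
  set m := (powGraph G).cliqueNum with hm
  set L := (Finset.Icc 1 m).lcm id with hLdef
  have hL0 : L ≠ 0 := by
    rw [hLdef, Ne, Finset.lcm_eq_zero_iff]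
    rintro ⟨x, hx, hx0⟩
    rw [Finset.mem_Icc] at hx
    simp only [id] at hx0
    omega
  -- pairwise commuting
  have hcomm : ∀ x ∈ (C : Set G), ∀ y ∈ (C : Set G), Commute x y := by
    intro x hx y hy
    rcases eq_or_ne x y with rfl | hne
    · exact Commute.refl x
    obtain ⟨-, hcyc⟩ := (hC hx hy hne : _ ∧ _)
    haveI := hcyc
    letI : CommGroup (Subgroup.closure ({x, y} : Set G)) := IsCyclic.commGroup
    have hxK : x ∈ Subgroup.closure ({x, y} : Set G) := subset_closure (by simp)
    have hyK : y ∈ Subgroup.closure ({x, y} : Set G) := subset_closure (by simp)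
    have h := mul_comm (⟨x, hxK⟩ : Subgroup.closure ({x, y} : Set G)) ⟨y, hyK⟩
    simpa [Subtype.ext_iff, commute_iff_eq] using h
  set H := Subgroup.closure (C : Set G) with hHdef
  have hcommH := aux_commute_closure hcomm
  have hcard_le : C.card ≤ Nat.card H := by
    calc C.card = (C : Set G).ncard := (Set.ncard_coe_finset C).symm
      _ ≤ (H : Set G).ncard := Set.ncard_le_ncard subset_closure (Set.toFinite _)
      _ = Nat.card H := by rw [← Nat.card_coe_set_eq]; rfl
  set n := Nat.card H with hndef
  have hn0 : n ≠ 0 := Nat.card_pos.ne'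
  suffices hdvd : n ∣ L by
    exact hcard_le.trans (Nat.le_of_dvd (Nat.pos_of_ne_zero hL0) hdvd)
  rw [← Nat.factorization_le_iff_dvd hn0 hL0]
  intro p
  by_cases hp : p.Prime
  swap
  · simp [Nat.factorization_eq_zero_of_not_prime _ hp]
  set a := n.factorization p with hadef
  rcases Nat.eq_zero_or_pos a with ha | ha
  · rw [ha]; exact Nat.zero_le _
  have hCne : C.Nonempty := by
    rcases C.eq_empty_or_nonempty with h | h
    · exfalso
      have : H = ⊥ := by rw [hHdef, h]; simpa using Subgroup.closure_empty
      have hn1 : n = 1 := by rw [hndef, this]; simp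
      rw [hadef, hn1] at ha; simp at ha
    · exact h
  have hpa1 : 1 < p ^ a := Nat.one_lt_pow ha.ne' hp.one_lt
  have hcop : Nat.Coprime (ordCompl[p] n) (p ^ a) :=
    ((Nat.coprime_ordCompl hp hn0).symm).pow_right a
  obtain ⟨u, -, hu⟩ := Nat.exists_mul_mod_eq_one_of_coprime hcop hpa1
  set e := ordCompl[p] n * u with hedef
  have he1 : e ≡ 1 [MOD p ^ a] := by
    unfold Nat.ModEq
    rw [hu, Nat.mod_eq_of_lt hpa1]
  have hndvd : n ∣ e * p ^ a := by
    have h1 : p ^ a * ordCompl[p] n = n := Nat.ordProj_mul_ordCompl_eq_self n p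
    exact ⟨u, by rw [← h1]; ring⟩
  have hkey1 : ∀ g : G, orderOf g ∣ n → (g ^ e) ^ p ^ a = 1 := by
    intro g hg
    rw [← pow_mul]
    exact orderOf_dvd_iff_pow_eq_one.mp (hg.trans hndvd)
  have hkey2 : ∀ g : G, orderOf g ∣ p ^ a → g ^ e = g := by
    intro g hg
    conv_rhs => rw [← pow_one g]
    exact pow_eq_pow_iff_modEq.mpr (Nat.ModEq.of_dvd hg he1)
  have hord : ∀ x ∈ C, orderOf x ∣ n :=
    fun x hx => Subgroup.orderOf_dvd_natCard H (subset_closure hx)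
  have hpow : ∀ x ∈ C, orderOf (x ^ e) ∣ p ^ a :=
    fun x hx => orderOf_dvd_iff_pow_eq_one.mpr (hkey1 x (hord x hx))
  obtain ⟨x0, hx0C, hx0max⟩ := C.exists_max_image (fun x => orderOf (x ^ e)) hCne
  set w := x0 ^ e with hwdef
  obtain ⟨j, hj, hwj⟩ := (Nat.dvd_prime_pow hp).mp (hpow x0 hx0C)
  have hclaim : ∀ x ∈ (C : Set G), x ^ e ∈ zpowers w := by
    intro x hx
    rcases eq_or_ne x x0 with rfl | hne
    · exact mem_zpowers w
    obtain ⟨-, hcyc⟩ := (hC hx (Finset.mem_coe.mpr hx0C) hne : _ ∧ _)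
    haveI := hcyc
    obtain ⟨c, hc⟩ := IsCyclic.exists_generator (α := Subgroup.closure ({x, x0} : Set G))
    have hxK : x ∈ Subgroup.closure ({x, x0} : Set G) := subset_closure (by simp)
    have hx0K : x0 ∈ Subgroup.closure ({x, x0} : Set G) := subset_closure (by simp)
    have hxc : x ∈ zpowers (c : G) := by
      obtain ⟨t, ht⟩ := hc ⟨x, hxK⟩
      exact ⟨t, by simpa using congrArg Subtype.val ht⟩
    have hx0c : x0 ∈ zpowers (c : G) := by
      obtain ⟨t, ht⟩ := hc ⟨x0, hx0K⟩
      exact ⟨t, by simpa using congrArg Subtype.val ht⟩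
    have h1 : x ^ e ∈ zpowers (c : G) := pow_mem hxc e
    have h2 : w ∈ zpowers (c : G) := pow_mem hx0c e
    obtain ⟨i, hi, hxe⟩ := (Nat.dvd_prime_pow hp).mp (hpow x (Finset.mem_coe.mp hx))
    have hle : orderOf (x ^ e) ≤ orderOf w := hx0max x (Finset.mem_coe.mp hx)
    refine aux_mem_zpowers_of_orderOf_dvd h1 h2 ?_
    rw [hxe, hwj]
    refine pow_dvd_pow p ((Nat.pow_le_pow_iff_right hp.one_lt).mp ?_)
    rw [← hxe, ← hwj]; exact hle
  have hclaim2 : ∀ g ∈ H, g ^ e ∈ zpowers w := by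
    intro g hg
    induction hg using Subgroup.closure_induction with
    | mem x hx => exact hclaim x hx
    | one => simpa using (zpowers w).one_mem
    | mul x y hx hy h1 h2 => rw [(hcommH x hx y hy).mul_pow]; exact mul_mem h1 h2
    | inv x hx h1 => rw [inv_pow]; exact inv_mem h1
  haveI : Fact p.Prime := ⟨hp⟩
  obtain ⟨P⟩ : Nonempty (Sylow p H) := inferInstance
  have hPcard : Nat.card P = p ^ a := P.card_eq_multiplicity
  have hPmem : ∀ h : (P : Subgroup H), ((h : H) : G) ∈ zpowers w := by
    intro h
    have h1 : orderOf ((h : H) : G) ∣ n := Subgroup.orderOf_dvd_natCard H (h : H).2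
    obtain ⟨k', hk'⟩ := P.isPGroup' h
    have h3 : orderOf ((h : H) : G) ∣ p ^ k' := by
      rw [Subgroup.orderOf_coe, Subgroup.orderOf_coe]
      exact orderOf_dvd_iff_pow_eq_one.mpr hk'
    obtain ⟨b, hb, h4⟩ := (Nat.dvd_prime_pow hp).mp h3
    have h5 : orderOf ((h : H) : G) ∣ p ^ a := by
      rw [h4]
      exact pow_dvd_pow p ((hp.pow_dvd_iff_le_factorization hn0).mp (h4 ▸ h1))
    rw [← hkey2 _ h5]
    exact hclaim2 _ (h : H).2
  have hle2 : p ^ a ≤ orderOf w := by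
    calc p ^ a = Nat.card (P : Subgroup H) := hPcard.symm
      _ ≤ Nat.card (zpowers w) := Nat.card_le_card_of_injective
          (fun h => (⟨((h : H) : G), hPmem h⟩ : zpowers w))
          (fun h1 h2 hh => by
            have h' := congrArg (fun x : zpowers w => (x : G)) hh
            simp only at h'
            exact Subtype.ext (Subtype.ext h'))
      _ = orderOf w := Nat.card_zpowers w
  have hpam : p ^ a ≤ m := hle2.trans (aux_orderOf_le_cliqueNum hp hwj)
  have hdvdL : p ^ a ∣ L := by
    have hmem : p ^ a ∈ Finset.Icc 1 m := Finset.mem_Icc.mpr ⟨Nat.one_le_iff_ne_zero.mpr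
      (pow_ne_zero a hp.pos.ne'), hpam⟩
    simpa using Finset.dvd_lcm (f := id) hmem
  exact (hp.pow_dvd_iff_le_factorization hL0).mp hdvdL

end Aux

/-- For a finite group `G` with `m` the clique number of the power graph, the
clique number of the enhanced power graph is at most `lcm(1, 2, …, m)`. -/
theorem cliqueNum_epow_le_lcm (G : Type*) [Group G] [Finite G] :
    (epowGraph G).cliqueNum ≤ (Finset.Icc 1 ((powGraph G).cliqueNum)).lcm id := by
  classical
  have := Fintype.ofFinite G
  refine csSup_le ⟨0, ∅, SimpleGraph.isNClique_empty.mpr rfl⟩ ?_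
  rintro n ⟨s, hs⟩
  rw [← hs.card_eq]
  exact aux_clique_card_le hs.isClique
end

section
/- Let G be a finite group and let S be the set of orders of elements of G. Then the chromatic number of the enhanced power graph of G is at most the sum over n ∈ S of φ(n), where φ is Euler's totient function. -/
open SimpleGraph

/-- In a finite cyclic group, elements of equal order generate the same subgroup. -/
lemma zpowers_eq_of_orderOf_eq_aux {K : Type*} [Group K] [Fintype K] [IsCyclic K]
    {u v : K} (h : orderOf u = orderOf v) : Subgroup.zpowers u = Subgroup.zpowers v := by
  classical
  have key : ∀ w : K, Set.toFinset (Subgroup.zpowers w : Set K)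
      = Finset.filter (fun a : K => a ^ orderOf w = 1) Finset.univ := by
    intro w
    apply Finset.eq_of_subset_of_card_le
    · intro b hb
      simp only [Set.mem_toFinset, SetLike.mem_coe] at hb
      obtain ⟨k, rfl⟩ := hb
      simp only [Finset.mem_filter, Finset.mem_univ, true_and]
      rw [← zpow_natCast, ← zpow_mul, mul_comm, zpow_mul, zpow_natCast,
        pow_orderOf_eq_one, one_zpow]
    · have h1 := IsCyclic.card_pow_eq_one_le (α := K) (orderOf_pos w)
      have h2 : (Set.toFinset (Subgroup.zpowers w : Set K)).card = orderOf w := by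
        rw [Set.toFinset_card]
        simpa using (Fintype.card_zpowers (x := w))
      rw [h2]
      convert h1 using 2
  apply SetLike.ext'
  apply Set.toFinset_inj.mp
  rw [key u, key v, h]

lemma zpowers_eq_of_adj_aux {G : Type*} [Group G] [Fintype G] {x y : G}
    (hcyc : IsCyclic (Subgroup.closure ({x, y} : Set G)))
    (h : orderOf x = orderOf y) : Subgroup.zpowers x = Subgroup.zpowers y := by
  classical
  set H := Subgroup.closure ({x, y} : Set G) with hH
  have hx : x ∈ H := Subgroup.subset_closure (Set.mem_insert _ _)
  have hy : y ∈ H := Subgroup.subset_closure (Set.mem_insert_of_mem _ rfl)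
  have h' : orderOf (⟨x, hx⟩ : H) = orderOf (⟨y, hy⟩ : H) := by
    rw [Subgroup.orderOf_mk, Subgroup.orderOf_mk, h]
  have heq := zpowers_eq_of_orderOf_eq_aux h'
  have h2 := congrArg (Subgroup.map H.subtype) heq
  rwa [MonoidHom.map_zpowers, MonoidHom.map_zpowers] at h2

open scoped Classical in
/-- A choice of generator for a subgroup of the form `zpowers x`. -/
noncomputable def subGenAux {G : Type*} [Group G] (H : Subgroup G) : G :=
  if h : ∃ g : G, Subgroup.zpowers g = H then h.choose else 1

lemma subGenAux_zpowers {G : Type*} [Group G] (x : G) :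
    Subgroup.zpowers (subGenAux (Subgroup.zpowers x)) = Subgroup.zpowers x := by
  have h : ∃ g : G, Subgroup.zpowers g = Subgroup.zpowers x := ⟨x, rfl⟩
  have h2 : subGenAux (Subgroup.zpowers x) = h.choose := by
    rw [subGenAux]
    exact dif_pos h
  rw [h2]
  exact h.choose_spec

/-- For a finite group `G` with `S` the set of element orders, the chromatic
number of the enhanced power graph is at most `∑_{n ∈ S} φ(n)`. -/
theorem chromaticNumber_epow_le_sum_totient (G : Type*) [Group G] [Fintype G] :
    (epowGraph G).chromaticNumber ≤
      ((∑ n ∈ Finset.image (fun x : G => orderOf x) Finset.univ, Nat.totient n : ℕ) : ℕ∞) := by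
  classical
  set S := Finset.image (fun x : G => orderOf x) Finset.univ with hS
  -- choose exponents
  have hexists : ∀ x : G, ∃ k : ℕ,
      (subGenAux (Subgroup.zpowers x)) ^ k = x ∧ Nat.Coprime k (orderOf x) := by
    intro x
    set g := subGenAux (Subgroup.zpowers x) with hg
    have hzp : Subgroup.zpowers g = Subgroup.zpowers x := subGenAux_zpowers x
    have hog : orderOf g = orderOf x := by
      rw [← Nat.card_zpowers, ← Nat.card_zpowers, hzp]
    have hxm : x ∈ Subgroup.zpowers g := hzp ▸ Subgroup.mem_zpowers x
    obtain ⟨k, hk'⟩ := (isOfFinOrder_of_finite g).mem_powers_iff_mem_zpowers.mpr hxm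
    have hk : g ^ k = x := hk'
    refine ⟨k, hk, ?_⟩
    by_cases hk0 : k = 0
    · subst hk0
      simp only [pow_zero] at hk
      rw [← hk, orderOf_one]
      exact Nat.coprime_one_right _
    · have hpow : orderOf (g ^ k) = orderOf g / Nat.gcd (orderOf g) k :=
        orderOf_pow' g hk0
      rw [hk, hog] at hpow
      have : Nat.gcd (orderOf x) k = 1 := by
        rcases (Nat.div_eq_self.mp hpow.symm) with h0 | h1
        · exact absurd h0 (orderOf_pos x).ne'
        · exact h1
      exact Nat.Coprime.symm this
  choose expo hexpo hco using hexists
  -- the coloring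
  have hmem : ∀ x : G, orderOf x ∈ S :=
    fun x => Finset.mem_image_of_mem _ (Finset.mem_univ x)
  letI instNZ : ∀ i : {n // n ∈ S}, NeZero (i : ℕ) := by
    rintro ⟨n, hn⟩
    simp only [hS, Finset.mem_image] at hn
    obtain ⟨x, -, rfl⟩ := hn
    exact ⟨(orderOf_pos x).ne'⟩
  letI instZ : ∀ i : {n // n ∈ S}, Fintype (ZMod (i : ℕ)) :=
    fun i => @ZMod.fintype _ (instNZ i)
  letI instU : ∀ i : {n // n ∈ S}, Fintype ((ZMod (i : ℕ))ˣ) :=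
    fun i => by letI := instZ i; infer_instance
  let C : (epowGraph G).Coloring (Σ n : {n // n ∈ S}, (ZMod (n : ℕ))ˣ) := by
    refine SimpleGraph.Coloring.mk
      (fun x => ⟨⟨orderOf x, hmem x⟩, ZMod.unitOfCoprime (expo x) (hco x)⟩) ?_
    intro x y hadj hc
    obtain ⟨hne, hcyc⟩ := hadj
    have hn : orderOf x = orderOf y := congrArg (fun p => (p.1 : ℕ)) hc
    have hzp : Subgroup.zpowers x = Subgroup.zpowers y := zpowers_eq_of_adj_aux hcyc hn
    set g := subGenAux (Subgroup.zpowers x) with hg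
    have hgy : subGenAux (Subgroup.zpowers y) = g := by rw [← hzp]
    have hog : orderOf g = orderOf x := by
      rw [hg, ← Nat.card_zpowers, ← Nat.card_zpowers, subGenAux_zpowers]
    have hval := congrArg
      (fun p : (Σ n : {n // n ∈ S}, (ZMod (n : ℕ))ˣ) =>
        ZMod.val ((p.2 : (ZMod (p.1 : ℕ))ˣ) : ZMod (p.1 : ℕ))) hc
    simp only [ZMod.coe_unitOfCoprime] at hval
    haveI : NeZero (orderOf x) := ⟨(orderOf_pos x).ne'⟩
    haveI : NeZero (orderOf y) := ⟨(orderOf_pos y).ne'⟩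
    rw [ZMod.val_natCast, ZMod.val_natCast] at hval
    have hmod : expo x ≡ expo y [MOD orderOf x] := by
      rw [Nat.ModEq, hval, hn]
    have hxy : x = y := by
      rw [← hexpo x, ← hexpo y, hgy, ← hg]
      rw [pow_eq_pow_iff_modEq, hog]
      exact hmod
    exact hne hxy
  have hcard : Fintype.card (Σ n : {n // n ∈ S}, (ZMod (n : ℕ))ˣ)
      = ∑ n ∈ S, Nat.totient n := by
    rw [Fintype.card_sigma]
    rw [← Finset.sum_coe_sort S (fun n => Nat.totient n)]
    apply Finset.sum_congr rfl
    intro i _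
    exact @ZMod.card_units_eq_totient _ (instNZ i) (instU i)
  have := C.colorable.chromaticNumber_le
  rw [hcard] at this
  exact this
end

section
/- Every finite simple graph Γ is isomorphic to an induced subgraph of the commuting graph of some finite group G; moreover G can be taken to be nilpotent of nilpotency class at most 2 and of exponent dividing 4. (Concretely, for Γ on n vertices, one may take G to be the set V × F₂, where V is an n-dimensional vector space over the field F₂ with two elements and B is a suitable bilinear form on V, with multiplication (v₁,a₁)∘(v₂,a₂) = (v₁+v₂, a₁+a₂+B(v₁,v₂)); then (v₁,a₁) and (v₂,a₂) commute if and only if B(v₁,v₂) = B(v₂,v₁).) -/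
open SimpleGraph

/-- `G` is nilpotent of nilpotency class at most 2. -/
def IsNilpotentOfClassLeTwo (G : Type*) [Group G] : Prop :=
  ∃ h : Group.IsNilpotent G, @Group.nilpotencyClass G _ ≤ 2

/-- The exponent of `G` divides 4. -/
def ExponentDvdFour (G : Type*) [Group G] : Prop :=
  Monoid.exponent G ∣ 4

section AuxGrp

set_option linter.unusedSectionVars false

variable {V : Type} [Fintype V] [DecidableEq V]

/-- Bilinear extension of `b` to `V → ZMod 2`. -/
def Bform (b : V → V → ZMod 2) (f g : V → ZMod 2) : ZMod 2 :=
  ∑ x, ∑ y, f x * g y * b x y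

variable (b : V → V → ZMod 2)

lemma Bform_add_left (f f' g : V → ZMod 2) :
    Bform b (f + f') g = Bform b f g + Bform b f' g := by
  simp [Bform, add_mul, Finset.sum_add_distrib]

lemma Bform_add_right (f g g' : V → ZMod 2) :
    Bform b f (g + g') = Bform b f g + Bform b f g' := by
  simp [Bform, mul_add, add_mul, Finset.sum_add_distrib]

lemma Bform_zero_left (g : V → ZMod 2) : Bform b 0 g = 0 := by
  simp [Bform]

lemma Bform_zero_right (f : V → ZMod 2) : Bform b f 0 = 0 := by
  simp [Bform]

lemma Bform_single (x y : V) :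
    Bform b (Pi.single x 1) (Pi.single y 1) = b x y := by
  simp [Bform, Pi.single_apply, ite_mul, Finset.sum_ite_eq']

/-- Carrier of the auxiliary group. -/
structure GrpCarrier (V : Type) where
  f : V → ZMod 2
  a : ZMod 2

lemma fun_add_self (f : V → ZMod 2) : f + f = 0 := by
  funext x; exact CharTwo.add_self_eq_zero (f x)

/-- Group structure on `GrpCarrier V` with cocycle `Bform b`. -/
def grpStruct : Group (GrpCarrier V) where
  mul p q := ⟨p.f + q.f, p.a + q.a + Bform b p.f q.f⟩
  one := ⟨0, 0⟩
  inv p := ⟨p.f, p.a + Bform b p.f p.f⟩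
  div p q := ⟨p.f + q.f, p.a + (q.a + Bform b q.f q.f) + Bform b p.f q.f⟩
  mul_assoc p q r := by
    refine GrpCarrier.mk.injEq .. ▸ ⟨?_, ?_⟩
    · show p.f + q.f + r.f = p.f + (q.f + r.f); abel
    · show p.a + q.a + Bform b p.f q.f + r.a + Bform b (p.f + q.f) r.f
        = p.a + (q.a + r.a + Bform b q.f r.f) + Bform b p.f (q.f + r.f)
      rw [Bform_add_left, Bform_add_right]; abel
  one_mul p := by
    show GrpCarrier.mk (0 + p.f) (0 + p.a + Bform b 0 p.f) = p
    simp [Bform_zero_left]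
  mul_one p := by
    show GrpCarrier.mk (p.f + 0) (p.a + 0 + Bform b p.f 0) = p
    simp [Bform_zero_right]
  inv_mul_cancel p := by
    show GrpCarrier.mk (p.f + p.f) (p.a + Bform b p.f p.f + p.a + Bform b p.f p.f)
      = ⟨0, 0⟩
    have h2 : ∀ a : ZMod 2, a + a = 0 := fun a => CharTwo.add_self_eq_zero a
    congr 1
    · exact fun_add_self p.f
    · calc p.a + Bform b p.f p.f + p.a + Bform b p.f p.f
          = (p.a + p.a) + (Bform b p.f p.f + Bform b p.f p.f) := by abel
        _ = 0 := by rw [h2, h2, add_zero]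

end AuxGrp

/-- Every finite simple graph is an induced subgraph of the commuting graph of
some finite group, which may be taken nilpotent of class at most 2 and of exponent dividing 4. -/
theorem graph_embeds_in_comGraph (V : Type) [Fintype V] (Γ : SimpleGraph V) :
    ∃ (G : Type) (instG : Group G) (_ : Fintype G),
      @IsNilpotentOfClassLeTwo G instG ∧ @ExponentDvdFour G instG ∧
      Nonempty (Γ ↪g @comGraph G instG) := by
  
  classical
  letI : LinearOrder V := LinearOrder.lift' (Fintype.equivFin V) (Fintype.equivFin V).injective
  set b : V → V → ZMod 2 := fun x y => if x < y ∧ ¬ Γ.Adj x y then 1 else 0 with hb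
  letI instG : Group (GrpCarrier V) := grpStruct b
  have mul_def : ∀ p q : GrpCarrier V,
      p * q = ⟨p.f + q.f, p.a + q.a + Bform b p.f q.f⟩ := fun _ _ => rfl
  have one_def : (1 : GrpCarrier V) = ⟨0, 0⟩ := rfl
  have h2 : ∀ a : ZMod 2, a + a = 0 := fun a => CharTwo.add_self_eq_zero a
  -- Fintype
  have e : ((V → ZMod 2) × ZMod 2) ≃ GrpCarrier V :=
    ⟨fun p => ⟨p.1, p.2⟩, fun g => (g.f, g.a), fun _ => rfl, fun _ => rfl⟩
  letI : Fintype (GrpCarrier V) := Fintype.ofEquiv _ e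
  -- elements with trivial first component are central
  have hcent : ∀ p : GrpCarrier V, p.f = 0 → ∀ q : GrpCarrier V, p * q = q * p := by
    intro p hp q
    rw [mul_def, mul_def, hp, Bform_zero_left, Bform_zero_right]
    congr 1
    · simp
    · abel
  -- commuting criterion
  have hcomm : ∀ p q : GrpCarrier V,
      (p * q = q * p ↔ Bform b p.f q.f = Bform b q.f p.f) := by
    intro p q
    rw [mul_def, mul_def]
    constructor
    · intro h
      have := congrArg GrpCarrier.a h
      simp only at this
      have h' : p.a + q.a + Bform b p.f q.f = p.a + q.a + Bform b q.f p.f := by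
        rw [this]; ring
      exact add_left_cancel h'
    · intro h; rw [h, add_comm p.f q.f, add_comm p.a q.a]
  refine ⟨GrpCarrier V, instG, inferInstance, ?_, ?_, ?_⟩
  · -- nilpotent of class ≤ 2
    have hfcenter : ∀ p : GrpCarrier V, p.f = 0 → p ∈ Subgroup.center (GrpCarrier V) := by
      intro p hp
      exact Subgroup.mem_center_iff.mpr fun q => (hcent p hp q).symm
    have hle : (⊤ : Subgroup (GrpCarrier V)).lowerCentralSeries 1 ≤ Subgroup.center (GrpCarrier V) := by
      rw [Subgroup.top_lowerCentralSeries_one, commutator_def, Subgroup.commutator_le]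
      intro g _ h _
      apply hfcenter
      show (g * h * g⁻¹ * h⁻¹).f = 0
      have hg : (g⁻¹).f = g.f := rfl
      have hh : (h⁻¹).f = h.f := rfl
      rw [mul_def, mul_def, mul_def]
      show (g.f + h.f) + (g⁻¹).f + (h⁻¹).f = 0
      rw [hg, hh]
      calc g.f + h.f + g.f + h.f = (g.f + g.f) + (h.f + h.f) := by abel
        _ = 0 := by rw [fun_add_self, fun_add_self, add_zero]
    have hlcs : (⊤ : Subgroup (GrpCarrier V)).lowerCentralSeries 2 = ⊥ :=
      Subgroup.lowerCentralSeries_succ_eq_bot ⊤ hle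
    have hnil : Group.IsNilpotent (GrpCarrier V) :=
      nilpotent_iff_lowerCentralSeries.mpr ⟨2, hlcs⟩
    exact ⟨hnil, lowerCentralSeries_eq_bot_iff_nilpotencyClass_le.mp hlcs⟩
  · -- exponent divides 4
    apply Monoid.exponent_dvd_of_forall_pow_eq_one
    intro g
    have hsq : ∀ p : GrpCarrier V, p.f = 0 → p * p = 1 := by
      intro p hp
      rw [mul_def, one_def, hp, Bform_zero_left]
      congr 1 <;> · simp [CharTwo.add_self_eq_zero]
    have hgf : (g * g).f = 0 := by rw [mul_def]; exact fun_add_self g.f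
    calc g ^ 4 = g * g * g * g := by rw [pow_succ, pow_succ, pow_succ, pow_one]
      _ = (g * g) * (g * g) := by rw [mul_assoc (g * g)]
      _ = 1 := hsq _ hgf
  · -- the graph embedding
    set φ : V → GrpCarrier V := fun x => ⟨Pi.single x 1, 0⟩ with hφ
    have hinj : Function.Injective φ := by
      intro x y hxy
      have := congrFun (congrArg GrpCarrier.f hxy) x
      simp only [hφ, Pi.single_eq_same] at this
      by_contra hne
      rw [Pi.single_eq_of_ne hne] at this
      exact one_ne_zero this
    have hBsingle : ∀ x y : V, Bform b (φ x).f (φ y).f = b x y := by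
      intro x y
      exact Bform_single b x y
    have hkey : ∀ x y : V, x ≠ y → ((φ x) * (φ y) = (φ y) * (φ x) ↔ Γ.Adj x y) := by
      have main : ∀ x y : V, x < y → ((φ x) * (φ y) = (φ y) * (φ x) ↔ Γ.Adj x y) := by
        intro x y hxy
        rw [hcomm, hBsingle, hBsingle, hb]
        simp only
        rw [if_neg (show ¬(y < x ∧ ¬Γ.Adj y x) from fun h => absurd h.1 (asymm hxy))]
        by_cases hadj : Γ.Adj x y
        · simp [hxy, hadj]
        · simp [hxy, hadj]
      intro x y hne
      rcases lt_or_gt_of_ne hne with h | h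
      · exact main x y h
      · rw [show ((φ x) * (φ y) = (φ y) * (φ x)) ↔ ((φ y) * (φ x) = (φ x) * (φ y)) from
          ⟨Eq.symm, Eq.symm⟩, Γ.adj_comm]
        exact main y x h
    refine ⟨⟨⟨φ, hinj⟩, ?_⟩⟩
    intro x y
    show (φ x ≠ φ y ∧ Commute (φ x) (φ y)) ↔ Γ.Adj x y
    constructor
    · rintro ⟨hne, hc⟩
      have hxy : x ≠ y := fun h => hne (by rw [h])
      exact (hkey x y hxy).mp hc
    · intro hadj
      have hxy : x ≠ y := Γ.ne_of_adj hadj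
      exact ⟨fun h => hxy (hinj h), (hkey x y hxy).mpr hadj⟩
end

section
/- Every finite simple graph is isomorphic to an induced subgraph of the enhanced power graph of some finite abelian group. -/
open SimpleGraph

set_option linter.unusedSectionVars false

theorem my_isCyclic_closure_pair_iff {G : Type*} [Group G] (x y : G) :
    IsCyclic (Subgroup.closure ({x, y} : Set G)) ↔
      ∃ z : G, x ∈ Subgroup.zpowers z ∧ y ∈ Subgroup.zpowers z := by
  constructor
  · rintro ⟨⟨g, hg⟩⟩
    refine ⟨(g : G), ?_, ?_⟩
    · obtain ⟨n, hn⟩ := hg ⟨x, Subgroup.subset_closure (by simp)⟩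
      exact ⟨n, by simpa using congrArg Subtype.val hn⟩
    · obtain ⟨n, hn⟩ := hg ⟨y, Subgroup.subset_closure (by simp)⟩
      exact ⟨n, by simpa using congrArg Subtype.val hn⟩
  · rintro ⟨z, hx, hy⟩
    have hle : Subgroup.closure ({x, y} : Set G) ≤ Subgroup.zpowers z := by
      rw [Subgroup.closure_le]
      rintro a (rfl | rfl) <;> assumption
    haveI : IsCyclic (Subgroup.zpowers z) :=
      ⟨⟨z, Subgroup.mem_zpowers z⟩, by
        rintro ⟨a, n, rfl⟩
        exact ⟨n, Subtype.ext (by simp)⟩⟩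
    exact Subgroup.isCyclic_of_le hle

theorem my_isAddCyclic_pi {ι : Type} [Fintype ι] (p : ι → ℕ) (hp : ∀ i, (p i).Prime)
    (hinj : Function.Injective p) (M : ι → Type) [∀ i, AddCommGroup (M i)] [∀ i, Finite (M i)]
    (hcard : ∀ i, Nat.card (M i) = p i) : IsAddCyclic (∀ i, M i) := by
  classical
  haveI : ∀ i, Fact (p i).Prime := fun i => ⟨hp i⟩
  haveI : ∀ i, IsAddCyclic (M i) := fun i => isAddCyclic_of_prime_card (hcard i)
  refine IsAddCyclic.of_exponent_eq_card ?_
  rw [AddMonoid.exponent_pi, Nat.card_pi]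
  have hexp : ∀ i, AddMonoid.exponent (M i) = p i := fun i =>
    (IsAddCyclic.exponent_eq_card).trans (hcard i)
  simp only [hexp, hcard]
  refine Nat.dvd_antisymm (Finset.lcm_dvd fun i _ => Finset.dvd_prod_of_mem p (Finset.mem_univ i)) ?_
  rw [← Finset.prod_image (g := p) (f := fun q => q) (fun i _ j _ h => hinj h)]
  refine Finset.prod_primes_dvd _ ?_ ?_
  · rintro q hq
    obtain ⟨i, _, rfl⟩ := Finset.mem_image.mp hq
    exact (hp i).prime
  · rintro q hq
    obtain ⟨i, _, rfl⟩ := Finset.mem_image.mp hq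
    exact Finset.dvd_lcm (Finset.mem_univ i)

section Construction

variable {V : Type} [Fintype V] [DecidableEq V] (Γ : SimpleGraph V) [DecidableRel Γ.Adj]
  (p : V → ℕ) [hfp : ∀ v, Fact (p v).Prime]

/-- The vertex labelling map into the big abelian group. -/
def myF : V → ∀ v, ZMod (p v) × ZMod (p v) := fun v w =>
  if w = v then (1, 0) else if Γ.Adj v w then 0 else (0, 1)

theorem myF_injective : Function.Injective (myF Γ p) := by
  intro u v h
  by_contra hne
  have h1 := congrArg Prod.fst (congrFun h u)
  by_cases h2 : Γ.Adj v u <;>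
    simp [myF, hne, h2, Ne.symm hne] at h1

theorem myF_key (hp : ∀ v, (p v).Prime) (hinj : Function.Injective p) {u v : V}
    (huv : Γ.Adj u v) :
    ∃ z, (∃ n : ℤ, n • z = myF Γ p u) ∧ (∃ m : ℤ, m • z = myF Γ p v) := by
  classical
  set c : ∀ w, ZMod (p w) × ZMod (p w) := fun w =>
    if w = u ∨ w = v then (1, 0) else (0, 1) with hc
  have hcne : ∀ w, c w ≠ 0 := by
    intro w
    by_cases h : w = u ∨ w = v <;> simp [hc, h, Prod.ext_iff]
  have hsmul : ∀ w (x : ZMod (p w) × ZMod (p w)), (p w) • x = 0 := by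
    intro w x
    have h1 : ∀ y : ZMod (p w), (p w) • y = 0 := fun y => by
      rw [nsmul_eq_mul, ZMod.natCast_self, zero_mul]
    ext <;> simp [h1]
  have hord : ∀ w, addOrderOf (c w) = p w := by
    intro w
    rcases ((hp w).eq_one_or_self_of_dvd _
      (addOrderOf_dvd_of_nsmul_eq_zero (hsmul w (c w)))) with h | h
    · exact absurd (AddMonoid.addOrderOf_eq_one_iff.mp h) (hcne w)
    · exact h
  have hcard : ∀ w, Nat.card ↥(AddSubgroup.zmultiples (c w)) = p w := fun w =>
    (Nat.card_zmultiples _).trans (hord w)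
  haveI hcyc := my_isAddCyclic_pi p hp hinj (fun w => ↥(AddSubgroup.zmultiples (c w))) hcard
  obtain ⟨z₀, hz₀⟩ := IsAddCyclic.exists_generator
    (α := ∀ w, ↥(AddSubgroup.zmultiples (c w)))
  have hmu : ∀ w, myF Γ p u w ∈ AddSubgroup.zmultiples (c w) := by
    intro w
    by_cases h1 : w = u
    · subst h1
      simp only [myF, if_pos rfl, hc, if_pos (Or.inl rfl)]
      exact AddSubgroup.mem_zmultiples _
    · by_cases h2 : Γ.Adj u w
      · simp only [myF, if_neg h1, if_pos h2]
        exact zero_mem _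
      · have h3 : w ≠ v := fun h => h2 (h ▸ huv)
        have h4 : ¬(w = u ∨ w = v) := by
          rintro (rfl | rfl)
          · exact h1 rfl
          · exact h3 rfl
        simp only [myF, if_neg h1, if_neg h2, hc, if_neg h4]
        exact AddSubgroup.mem_zmultiples _
  have hmv : ∀ w, myF Γ p v w ∈ AddSubgroup.zmultiples (c w) := by
    intro w
    by_cases h1 : w = v
    · subst h1
      simp only [myF, if_pos rfl, hc, if_pos (Or.inr rfl)]
      exact AddSubgroup.mem_zmultiples _
    · by_cases h2 : Γ.Adj v w
      · simp only [myF, if_neg h1, if_pos h2]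
        exact zero_mem _
      · have h3 : w ≠ u := fun h => h2 (h ▸ huv.symm)
        have h4 : ¬(w = u ∨ w = v) := by
          rintro (rfl | rfl)
          · exact h3 rfl
          · exact h1 rfl
        simp only [myF, if_neg h1, if_neg h2, hc, if_neg h4]
        exact AddSubgroup.mem_zmultiples _
  refine ⟨fun w => (z₀ w : ZMod (p w) × ZMod (p w)), ?_, ?_⟩
  · obtain ⟨n, hn⟩ := hz₀ (fun w => ⟨myF Γ p u w, hmu w⟩)
    refine ⟨n, funext fun w => ?_⟩
    simpa using congrArg Subtype.val (congrFun hn w)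
  · obtain ⟨m, hm⟩ := hz₀ (fun w => ⟨myF Γ p v w, hmv w⟩)
    refine ⟨m, funext fun w => ?_⟩
    simpa using congrArg Subtype.val (congrFun hm w)

theorem myF_key2 {u v : V} (hne : u ≠ v)
    (h : ∃ z, (∃ n : ℤ, n • z = myF Γ p u) ∧ (∃ m : ℤ, m • z = myF Γ p v)) :
    Γ.Adj u v := by
  obtain ⟨z, ⟨n, hn⟩, ⟨m, hm⟩⟩ := h
  by_contra hadj
  have h1 := congrFun hn u
  have h2 := congrFun hm u
  simp only [myF, if_pos rfl, if_true, Pi.smul_apply] at h1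
  simp only [myF, if_neg hne, if_neg (fun (h : Γ.Adj v u) => hadj h.symm), Pi.smul_apply] at h2
  have ha1 : (n : ZMod (p u)) * (z u).1 = 1 := by
    have := congrArg Prod.fst h1
    simpa [zsmul_eq_mul] using this
  have hb0 : (n : ZMod (p u)) * (z u).2 = 0 := by
    have := congrArg Prod.snd h1
    simpa [zsmul_eq_mul] using this
  have hb1 : (m : ZMod (p u)) * (z u).2 = 1 := by
    have := congrArg Prod.snd h2
    simpa [zsmul_eq_mul] using this
  have hnne : (n : ZMod (p u)) ≠ 0 := fun h =>
    one_ne_zero (by rw [h, zero_mul] at ha1; exact ha1.symm)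
  have : (z u).2 = 0 := by
    rcases mul_eq_zero.mp hb0 with h | h
    · exact absurd h hnne
    · exact h
  rw [this, mul_zero] at hb1
  exact one_ne_zero hb1.symm

end Construction

/-- Every finite simple graph is an induced subgraph of the enhanced power graph
of some finite abelian group. -/
theorem graph_embeds_in_epowGraph (V : Type) [Fintype V] (Γ : SimpleGraph V) :
    ∃ (G : Type) (instG : CommGroup G) (_ : Fintype G),
      Nonempty (Γ ↪g @epowGraph G instG.toGroup) := by
  classical
  let p : V → ℕ := fun v => Nat.nth Nat.Prime ((Fintype.equivFin V) v)
  have hp : ∀ v, (p v).Prime := fun v => Nat.prime_nth_prime _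
  have hpinj : Function.Injective p := fun a b h =>
    (Fintype.equivFin V).injective
      (Fin.val_injective (Nat.nth_injective Nat.infinite_setOf_prime h))
  haveI : ∀ v, Fact (p v).Prime := fun v => ⟨hp v⟩
  refine ⟨Multiplicative (∀ v : V, ZMod (p v) × ZMod (p v)), inferInstance, inferInstance, ⟨?_⟩⟩
  refine ⟨⟨fun v => Multiplicative.ofAdd (myF Γ p v), fun u v h =>
    myF_injective Γ p (Multiplicative.ofAdd.injective h)⟩, ?_⟩
  intro u v
  show (Multiplicative.ofAdd (myF Γ p u) ≠ Multiplicative.ofAdd (myF Γ p v) ∧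
      IsCyclic (Subgroup.closure ({Multiplicative.ofAdd (myF Γ p u), Multiplicative.ofAdd (myF Γ p v)} : Set (Multiplicative (∀ v : V, ZMod (p v) × ZMod (p v)))))) ↔ Γ.Adj u v
  constructor
  · rintro ⟨hne, hcyc⟩
    have huvne : u ≠ v := fun h => hne (by rw [h])
    rw [my_isCyclic_closure_pair_iff] at hcyc
    obtain ⟨z, ⟨n, hnz⟩, ⟨m, hmz⟩⟩ := hcyc
    refine myF_key2 Γ p huvne ⟨z.toAdd, ⟨n, ?_⟩, ⟨m, ?_⟩⟩
    · have := congrArg Multiplicative.toAdd hnz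
      simpa using this
    · have := congrArg Multiplicative.toAdd hmz
      simpa using this
  · intro h
    refine ⟨fun hEq => Γ.ne_of_adj h
      (myF_injective Γ p (Multiplicative.ofAdd.injective hEq)), ?_⟩
    rw [my_isCyclic_closure_pair_iff]
    obtain ⟨z, ⟨n, hn⟩, ⟨m, hm⟩⟩ := myF_key Γ p hp hpinj h
    refine ⟨Multiplicative.ofAdd z, ⟨n, ?_⟩, ⟨m, ?_⟩⟩
    · apply Multiplicative.toAdd.injective
      simpa using hn
    · apply Multiplicative.toAdd.injective
      simpa using hm
end

section
/- Let G be a nontrivial finite group with trivial centre, Z(G) = {1}. Then the induced subgraph of the commuting graph of G on the set G \ {1} of non-identity elements is connected if and only if the Gruenberg–Kegel graph of G is connected. -/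
open SimpleGraph

/-- The Gruenberg–Kegel (prime) graph of a finite group `G`: vertices are the primes dividing
`|G|`, with distinct `p`, `q` adjacent iff `G` has an element of order `p * q`. -/
def gkGraph (G : Type*) [Group G] : SimpleGraph {p : ℕ // p.Prime ∧ p ∣ Nat.card G} where
  Adj p q := p ≠ q ∧ ∃ x : G, orderOf x = p.1 * q.1
  symm := by
    constructor
    intro p q h
    refine ⟨h.1.symm, ?_⟩
    rw [mul_comm]
    exact h.2
  loopless := ⟨fun _ h => h.1 rfl⟩

set_option linter.unusedSectionVars false
set_option linter.unusedVariables false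
set_option maxHeartbeats 1000000

section AuxCommutingGK
open Pointwise

variable {G : Type*} [Group G] [Finite G]

def Rch (x y : G) : Prop :=
  ∃ (hx : x ≠ 1) (hy : y ≠ 1),
    ((comGraph G).induce {z : G | z ≠ 1}).Reachable ⟨x, hx⟩ ⟨y, hy⟩

theorem rch_refl {x : G} (hx : x ≠ 1) : Rch x x := ⟨hx, hx, .refl _⟩

theorem Rch.symm {x y : G} (h : Rch x y) : Rch y x := ⟨h.2.1, h.1, h.2.2.symm⟩

theorem Rch.ne_one {x y : G} (h : Rch x y) : x ≠ 1 := h.1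
theorem Rch.ne_one' {x y : G} (h : Rch x y) : y ≠ 1 := h.2.1

theorem Rch.trans {x y z : G} (h : Rch x y) (h' : Rch y z) : Rch x z :=
  ⟨h.1, h'.2.1, h.2.2.trans h'.2.2⟩

theorem rch_of_commute {x y : G} (hx : x ≠ 1) (hy : y ≠ 1) (h : Commute x y) : Rch x y := by
  rcases eq_or_ne x y with rfl | hne
  · exact rch_refl hx
  · exact ⟨hx, hy, SimpleGraph.Adj.reachable ⟨hne, h⟩⟩

/-- conjugation as a graph hom of the reduced commuting graph -/
def conjHom (g : G) :
    ((comGraph G).induce {z : G | z ≠ 1}) →g ((comGraph G).induce {z : G | z ≠ 1}) where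
  toFun v := ⟨g * v.1 * g⁻¹, fun h => v.2 (conj_eq_one_iff.mp h)⟩
  map_rel' := by
    rintro a b ⟨hne, hc⟩
    refine ⟨fun h => hne ?_, hc.map (MulAut.conj g).toMonoidHom⟩
    have h2 : g * (a : G) * g⁻¹ = g * (b : G) * g⁻¹ := h
    exact show (a : G) = b from mul_left_cancel (mul_right_cancel h2)

theorem Rch.conj {x y : G} (h : Rch x y) (g : G) : Rch (g * x * g⁻¹) (g * y * g⁻¹) := by
  obtain ⟨hx, hy, hr⟩ := h
  exact ⟨fun h => hx (conj_eq_one_iff.mp h), fun h => hy (conj_eq_one_iff.mp h),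
    hr.map (conjHom g)⟩

theorem orderOf_conj' (x g : G) : orderOf (g * x * g⁻¹) = orderOf x := by
  have := orderOf_injective (MulAut.conj g).toMonoidHom
    (MulEquiv.injective _) x
  simpa [MulAut.conj_apply] using this

theorem orderOf_pow_div {x : G} {d : ℕ} (hd : d ∣ orderOf x) :
    orderOf (x ^ (orderOf x / d)) = d := by
  rw [orderOf_pow, Nat.gcd_eq_right (Nat.div_dvd_of_dvd hd),
    Nat.div_div_self hd (orderOf_pos x).ne']

theorem rch_pow_prime {x : G} (hx : x ≠ 1) {q : ℕ} (hq : q.Prime) (hdvd : q ∣ orderOf x) :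
    ∃ u : G, orderOf u = q ∧ Rch x u := by
  refine ⟨x ^ (orderOf x / q), orderOf_pow_div hdvd,
    rch_of_commute hx ?_ (Commute.pow_right rfl _)⟩
  intro h
  rw [← orderOf_eq_one_iff, orderOf_pow_div hdvd] at h
  exact hq.one_lt.ne' h

theorem ne_one_of_prime_dvd {x : G} {q : ℕ} (hq : q.Prime) (hdvd : q ∣ orderOf x) : x ≠ 1 := by
  intro h; subst h
  simp only [orderOf_one, Nat.dvd_one] at hdvd
  exact hq.one_lt.ne' hdvd

theorem rch_of_mem_pgroup {p : ℕ} (hp : p.Prime) {S : Subgroup G} (hS : IsPGroup p S)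
    {x y : G} (hxS : x ∈ S) (hyS : y ∈ S) (hx : x ≠ 1) (hy : y ≠ 1) : Rch x y := by
  haveI : Nontrivial S := ⟨⟨⟨x, hxS⟩, 1, fun h => hx (by simpa using congrArg Subtype.val h)⟩⟩
  haveI : Fact p.Prime := ⟨hp⟩
  haveI := hS.center_nontrivial
  obtain ⟨z, hz⟩ := exists_ne (1 : Subgroup.center S)
  have hz1 : ((z : S) : G) ≠ 1 := by
    intro h
    exact hz (by ext; simpa using h)
  have hcom : ∀ w : S, Commute (w : G) ((z : S) : G) := by
    intro w
    have := (Subgroup.mem_center_iff.mp z.2) w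
    exact congrArg Subtype.val this
  exact (rch_of_commute hx hz1 (hcom ⟨x, hxS⟩)).trans
    (rch_of_commute hz1 hy (hcom ⟨y, hyS⟩).symm)

theorem exists_orderOf_eq_mul_self {x : G} {p q : ℕ} (hp : p.Prime) (hq : q.Prime) (hne : p ≠ q)
    (hpx : p ∣ orderOf x) (hqx : q ∣ orderOf x) : ∃ z : G, orderOf z = p * q := by
  have hco : Nat.Coprime p q := (Nat.coprime_primes hp hq).mpr hne
  have hdvd : p * q ∣ orderOf x := hco.mul_dvd_of_dvd_of_dvd hpx hqx
  exact ⟨x ^ (orderOf x / (p * q)), orderOf_pow_div hdvd⟩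

theorem exists_orderOf_mul_of_commute {x y : G} (hc : Commute x y) {p q : ℕ}
    (hp : p.Prime) (hq : q.Prime) (hne : p ≠ q) (hpx : p ∣ orderOf x) (hqy : q ∣ orderOf y) :
    ∃ z : G, orderOf z = p * q := by
  have ha : orderOf (x ^ (orderOf x / p)) = p := orderOf_pow_div hpx
  have hb : orderOf (y ^ (orderOf y / q)) = q := orderOf_pow_div hqy
  have hab : Commute (x ^ (orderOf x / p)) (y ^ (orderOf y / q)) := hc.pow_pow _ _
  refine ⟨x ^ (orderOf x / p) * y ^ (orderOf y / q), ?_⟩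
  rw [hab.orderOf_mul_eq_mul_orderOf_of_coprime
    (by rw [ha, hb]; exact (Nat.coprime_primes hp hq).mpr hne), ha, hb]

theorem finite_sylow (q : ℕ) : Finite (Sylow q G) :=
  Finite.of_injective (fun S => (S : Subgroup G)) (fun _ _ h => Sylow.ext h)

theorem exists_sylow_mem {u : G} {q : ℕ} (hu : orderOf u = q) :
    ∃ S : Sylow q G, u ∈ S := by
  have : IsPGroup q (Subgroup.zpowers u) :=
    IsPGroup.of_card (by rw [Nat.card_zpowers, hu, pow_one])
  obtain ⟨S, hS⟩ := this.exists_le_sylow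
  exact ⟨S, hS (Subgroup.mem_zpowers u)⟩

theorem conj_mem_smul {q : ℕ} (S : Sylow q G) {u : G} (hu : u ∈ S) (g : G) :
    g * u * g⁻¹ ∈ (g • S : Sylow q G) := by
  have h : g * u * g⁻¹ ∈ (MulAut.conj g • (S : Subgroup G)) :=
    (Subgroup.mem_smul_pointwise_iff_exists (g * u * g⁻¹) (MulAut.conj g) S).mpr
      ⟨u, hu, by simp [MulAut.smul_def, MulAut.conj_apply]⟩
  rwa [← Sylow.coe_subgroup_smul] at h

theorem gk_reach_aux (a b : {z : G // z ∈ {w : G | w ≠ 1}})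
    (hr : Relation.ReflTransGen ((comGraph G).induce {z : G | z ≠ 1}).Adj a b) :
    ∀ q : ℕ, ∀ hq : q.Prime, ∀ hq1 : q ∣ orderOf b.1, ∀ p : ℕ, ∀ hp : p.Prime,
      ∀ hp1 : p ∣ orderOf a.1,
      (gkGraph G).Reachable ⟨p, hp, hp1.trans (orderOf_dvd_natCard a.1)⟩
        ⟨q, hq, hq1.trans (orderOf_dvd_natCard b.1)⟩ := by
  induction hr with
  | refl =>
    intro q hq hq1 p hp hp1
    rcases eq_or_ne p q with rfl | hne
    · exact SimpleGraph.Reachable.refl _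
    · obtain ⟨z, hz⟩ := exists_orderOf_eq_mul_self hp hq hne hp1 hq1
      exact SimpleGraph.Adj.reachable ⟨fun h => hne (congrArg Subtype.val h), z, hz⟩
  | @tail b c hab hbc ih =>
    intro q hq hq1 p hp hp1
    obtain ⟨hne, hcom⟩ := hbc
    have hb1 : (b.1 : G) ≠ 1 := b.2
    have hordb : orderOf b.1 ≠ 1 := fun h => hb1 (orderOf_eq_one_iff.mp h)
    obtain ⟨r, hrp, hrd⟩ := Nat.exists_prime_and_dvd hordb
    have h1 := ih r hrp hrd p hp hp1
    rcases eq_or_ne r q with rfl | hrq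
    · exact h1
    · obtain ⟨z, hz⟩ := exists_orderOf_mul_of_commute hcom hrp hq hrq hrd hq1
      exact h1.trans (SimpleGraph.Adj.reachable ⟨fun h => hrq (congrArg Subtype.val h), z, hz⟩)

theorem pi_step {x₀ : G} {q r : ℕ} (hq : q.Prime) (hr : r.Prime) (hqr : q ≠ r)
    {z : G} (hz : orderOf z = q * r) (hPq : ∃ w, Rch x₀ w ∧ q ∣ orderOf w) :
    ∃ w, Rch x₀ w ∧ r ∣ orderOf w := by
  obtain ⟨w, hw, hqw⟩ := hPq
  obtain ⟨u, hu, hwu⟩ := rch_pow_prime hw.ne_one' hq hqw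
  have hxu : Rch x₀ u := hw.trans hwu
  have hqz : q ∣ orderOf z := hz ▸ ⟨r, rfl⟩
  have hrz : r ∣ orderOf z := hz ▸ ⟨q, mul_comm q r⟩
  have ha : orderOf (z ^ (orderOf z / q)) = q := orderOf_pow_div hqz
  have hb : orderOf (z ^ (orderOf z / r)) = r := orderOf_pow_div hrz
  have hane : z ^ (orderOf z / q) ≠ 1 := ne_one_of_prime_dvd hq (dvd_of_eq ha.symm)
  have hbne : z ^ (orderOf z / r) ≠ 1 := ne_one_of_prime_dvd hr (dvd_of_eq hb.symm)
  have hab : Rch (z ^ (orderOf z / q)) (z ^ (orderOf z / r)) :=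
    rch_of_commute hane hbne ((Commute.refl z).pow_pow _ _)
  obtain ⟨S, hS⟩ := exists_sylow_mem hu
  obtain ⟨Sa, hSa⟩ := exists_sylow_mem ha
  haveI : Fact q.Prime := ⟨hq⟩
  haveI : Finite (Sylow q G) := finite_sylow q
  obtain ⟨g, hg⟩ := MulAction.exists_smul_eq G Sa S
  have hgaS : g * z ^ (orderOf z / q) * g⁻¹ ∈ S := by
    rw [← hg]; exact conj_mem_smul Sa hSa g
  have hune : u ≠ 1 := ne_one_of_prime_dvd hq (dvd_of_eq hu.symm)
  have h1 : Rch u (g * z ^ (orderOf z / q) * g⁻¹) :=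
    rch_of_mem_pgroup hq S.isPGroup' hS hgaS hune
      (by rw [ne_eq, ← orderOf_eq_one_iff, orderOf_conj', ha]; exact hq.one_lt.ne')
  have h2 : Rch (g * z ^ (orderOf z / q) * g⁻¹) (g * z ^ (orderOf z / r) * g⁻¹) := hab.conj g
  refine ⟨g * z ^ (orderOf z / r) * g⁻¹, (hxu.trans h1).trans h2, ?_⟩
  rw [orderOf_conj', hb]

def Hsub (x₀ : G) (hx₀ : x₀ ≠ 1) : Subgroup G where
  carrier := {g : G | Rch x₀ (g * x₀ * g⁻¹)}
  one_mem' := by simpa using rch_refl hx₀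
  mul_mem' := by
    intro a b ha hb
    have h2 := hb.conj a
    have h3 : a * (b * x₀ * b⁻¹) * a⁻¹ = (a * b) * x₀ * (a * b)⁻¹ := by group
    rw [h3] at h2
    exact ha.trans h2
  inv_mem' := by
    intro a ha
    have h2 := Rch.conj ha a⁻¹
    have h3 : a⁻¹ * (a * x₀ * a⁻¹) * a⁻¹⁻¹ = x₀ := by group
    rw [h3] at h2
    exact h2.symm

theorem sylow_le_Hsub {x₀ : G} (hx₀ : x₀ ≠ 1) {q : ℕ} (hq : q.Prime)
    (hPq : ∃ w, Rch x₀ w ∧ q ∣ orderOf w) :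
    ∃ S : Sylow q G, (S : Subgroup G) ≤ Hsub x₀ hx₀ := by
  obtain ⟨w, hw, hqw⟩ := hPq
  obtain ⟨u, hu, hwu⟩ := rch_pow_prime hw.ne_one' hq hqw
  have hxu : Rch x₀ u := hw.trans hwu
  obtain ⟨S, hS⟩ := exists_sylow_mem hu
  refine ⟨S, fun s hs => ?_⟩
  show Rch x₀ (s * x₀ * s⁻¹)
  rcases eq_or_ne s 1 with rfl | hs1
  · simpa using rch_refl hx₀
  have hsus : s * u * s⁻¹ ∈ S := mul_mem (mul_mem hs hS) (inv_mem hs)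
  have hune : u ≠ 1 := ne_one_of_prime_dvd hq (dvd_of_eq hu.symm)
  have h1 : Rch u (s * u * s⁻¹) :=
    rch_of_mem_pgroup hq S.isPGroup' hS hsus hune
      (by rw [ne_eq, ← orderOf_eq_one_iff, orderOf_conj', hu]; exact hq.one_lt.ne')
  have h2 : Rch (s * u * s⁻¹) (s * x₀ * s⁻¹) := (hxu.symm).conj s
  exact (hxu.trans h1).trans h2

theorem Hsub_eq_top {x₀ : G} (hx₀ : x₀ ≠ 1)
    (hall : ∀ q : ℕ, q.Prime → q ∣ Nat.card G → ∃ w, Rch x₀ w ∧ q ∣ orderOf w) :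
    Hsub x₀ hx₀ = ⊤ := by
  rw [← Subgroup.index_eq_one]
  by_contra hne
  obtain ⟨q, hq, hdvd⟩ := Nat.exists_prime_and_dvd hne
  haveI : Fact q.Prime := ⟨hq⟩
  haveI : Finite (Sylow q G) := finite_sylow q
  have hqcard : q ∣ Nat.card G := hdvd.trans (Subgroup.index_dvd_card _)
  obtain ⟨S, hS⟩ := sylow_le_Hsub hx₀ hq (hall q hq hqcard)
  exact S.not_dvd_index (hdvd.trans (Subgroup.index_dvd_of_le hS))

theorem pi_all {x₀ : G} (hx₀ : x₀ ≠ 1) (hgk : (gkGraph G).Connected) :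
    ∀ q : ℕ, q.Prime → q ∣ Nat.card G → ∃ w, Rch x₀ w ∧ q ∣ orderOf w := by
  have hord : orderOf x₀ ≠ 1 := fun h => hx₀ (orderOf_eq_one_iff.mp h)
  obtain ⟨p₀, hp₀, hp₀d⟩ := Nat.exists_prime_and_dvd hord
  intro q hq hqcard
  have hreach := hgk.preconnected ⟨p₀, hp₀, hp₀d.trans (orderOf_dvd_natCard x₀)⟩ ⟨q, hq, hqcard⟩
  rw [reachable_iff_reflTransGen] at hreach
  suffices h : ∀ v : {p : ℕ // p.Prime ∧ p ∣ Nat.card G},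
      Relation.ReflTransGen (gkGraph G).Adj
        ⟨p₀, hp₀, hp₀d.trans (orderOf_dvd_natCard x₀)⟩ v →
      ∃ w, Rch x₀ w ∧ v.1 ∣ orderOf w by
    exact h _ hreach
  intro v hv
  induction hv with
  | refl => exact ⟨x₀, rch_refl hx₀, hp₀d⟩
  | @tail b c hab hbc ih =>
    obtain ⟨hne, z, hz⟩ := hbc
    exact pi_step b.2.1 c.2.1 (fun h => hne (Subtype.ext h)) hz ih

theorem rch_x0_of_prime_order {x₀ : G} (hx₀ : x₀ ≠ 1) (hgk : (gkGraph G).Connected)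
    {u : G} {q : ℕ} (hq : q.Prime) (hu : orderOf u = q) : Rch x₀ u := by
  have hall := pi_all hx₀ hgk
  have hqcard : q ∣ Nat.card G := hu ▸ orderOf_dvd_natCard u
  obtain ⟨w, hw, hqw⟩ := hall q hq hqcard
  obtain ⟨u', hu', hwu'⟩ := rch_pow_prime hw.ne_one' hq hqw
  have hxu' : Rch x₀ u' := hw.trans hwu'
  obtain ⟨S', hS'⟩ := exists_sylow_mem hu'
  obtain ⟨Su, hSu⟩ := exists_sylow_mem hu
  haveI : Fact q.Prime := ⟨hq⟩
  haveI : Finite (Sylow q G) := finite_sylow q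
  obtain ⟨g, hg⟩ := MulAction.exists_smul_eq G Su S'
  have hguS : g * u * g⁻¹ ∈ S' := by rw [← hg]; exact conj_mem_smul Su hSu g
  have hune : u ≠ 1 := ne_one_of_prime_dvd hq (dvd_of_eq hu.symm)
  have hu'ne : u' ≠ 1 := ne_one_of_prime_dvd hq (dvd_of_eq hu'.symm)
  have h1 : Rch u' (g * u * g⁻¹) :=
    rch_of_mem_pgroup hq S'.isPGroup' hS' hguS hu'ne
      (by rw [ne_eq, ← orderOf_eq_one_iff, orderOf_conj', hu]; exact hq.one_lt.ne')
  have h2 : Rch x₀ (g * u * g⁻¹) := hxu'.trans h1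
  have hginv : Rch x₀ (g⁻¹ * x₀ * g⁻¹⁻¹) := by
    have hmem : g⁻¹ ∈ Hsub x₀ hx₀ := by rw [Hsub_eq_top hx₀ hall]; exact Subgroup.mem_top g⁻¹
    exact hmem
  have h3 := h2.conj g⁻¹
  have h4 : g⁻¹ * (g * u * g⁻¹) * g⁻¹⁻¹ = u := by group
  rw [h4] at h3
  exact hginv.trans h3


end AuxCommutingGK

/-- For a nontrivial finite group `G` with trivial centre, the commuting graph
restricted to non-identity elements is connected iff the Gruenberg–Kegel graph of `G` is
connected. -/
theorem reduced_comGraph_connected_iff_gk_connected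
    (G : Type*) [Group G] [Finite G] [Nontrivial G]
    (hZ : Subgroup.center G = ⊥) :
    ((comGraph G).induce {x : G | x ≠ 1}).Connected ↔ (gkGraph G).Connected := by
  constructor
  · intro h
    have hcard : Nat.card G ≠ 1 := (Finite.one_lt_card (α := G)).ne'
    obtain ⟨p1, hp1, hd1⟩ := Nat.exists_prime_and_dvd hcard
    rw [connected_iff]
    refine ⟨?_, ⟨⟨p1, hp1, hd1⟩⟩⟩
    rintro ⟨p, hp, hpd⟩ ⟨q, hq, hqd⟩
    haveI := Fintype.ofFinite G
    haveI : Fact p.Prime := ⟨hp⟩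
    haveI : Fact q.Prime := ⟨hq⟩
    have hpd' : p ∣ Fintype.card G := by rwa [Nat.card_eq_fintype_card] at hpd
    have hqd' : q ∣ Fintype.card G := by rwa [Nat.card_eq_fintype_card] at hqd
    obtain ⟨x, hx⟩ := exists_prime_orderOf_dvd_card p hpd'
    obtain ⟨y, hy⟩ := exists_prime_orderOf_dvd_card q hqd'
    have hx1 : x ≠ 1 := ne_one_of_prime_dvd hp (dvd_of_eq hx.symm)
    have hy1 : y ≠ 1 := ne_one_of_prime_dvd hq (dvd_of_eq hy.symm)
    have hr : Relation.ReflTransGen ((comGraph G).induce {z : G | z ≠ 1}).Adj ⟨x, hx1⟩ ⟨y, hy1⟩ := by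
      rw [← reachable_iff_reflTransGen]
      exact h.preconnected ⟨x, hx1⟩ ⟨y, hy1⟩
    exact gk_reach_aux ⟨x, hx1⟩ ⟨y, hy1⟩ hr q hq (dvd_of_eq hy.symm) p hp (dvd_of_eq hx.symm)
  · intro hgk
    obtain ⟨x₀, hx₀⟩ := exists_ne (1 : G)
    rw [connected_iff]
    refine ⟨?_, ⟨⟨x₀, hx₀⟩⟩⟩
    have key : ∀ c : G, c ≠ 1 → Rch x₀ c := by
      intro c hc
      have hordc : orderOf c ≠ 1 := fun h => hc (orderOf_eq_one_iff.mp h)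
      obtain ⟨r, hrp, hrd⟩ := Nat.exists_prime_and_dvd hordc
      obtain ⟨u, hu, hcu⟩ := rch_pow_prime hc hrp hrd
      exact (rch_x0_of_prime_order hx₀ hgk hrp hu).trans hcu.symm
    rintro ⟨a, ha⟩ ⟨b, hb⟩
    exact ((key a ha).symm.trans (key b hb)).2.2
end
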